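/- arXiv:1808.02674 — 5 statements merged into one kernel-verified Lean document; each statement's English description precedes it below -/
import Mathlib

section
/- Let G be a connected bipartite graph on the vertex set Σ = {0,…,N−1}. For every n ≥ 1, the diameter of the hierarchical graph HM_n equals 2(n−1) + diam(G). -/
open Filter Finset

/-- A subgraph `B` of a graph `H` is an `ℓ`-box if any two of its vertices are at
distance at most `ℓ - 1` *within* `B`. -/
def SimpleGraph.IsBox {V : Type*} (H : SimpleGraph V) (ℓ : ℕ) (B : H.Subgraph) : Prop :=
  ∀ u v : B.verts, B.coe.Reachable u v ∧ B.coe.dist u v ≤ ℓ - 1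

/-- `coveringNumber H ℓ` is the minimum number of `ℓ`-boxes whose vertex sets cover `H`. -/
noncomputable def coveringNumber {V : Type*} (H : SimpleGraph V) (ℓ : ℕ) : ℕ :=
  sInf {m : ℕ | ∃ F : Finset H.Subgraph, F.card = m ∧ (∀ B ∈ F, H.IsBox ℓ B) ∧
    ∀ v : V, ∃ B ∈ F, v ∈ B.verts}

/-- The adjacency-generating relation of the hierarchical model `HM_n`: the two words
agree on a (maximal) common prefix of length `k`; beyond the prefix one word has all
its letters in `V₁` (`typ = true`) and the other has all its letters in `V₂`
(`typ = false`); and every coordinate pair beyond the prefix is an edge of the base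
graph `G`. -/
def HMRel (N : ℕ) (G : SimpleGraph (Fin N)) (typ : Fin N → Bool) (n : ℕ)
    (x y : Fin n → Fin N) : Prop :=
  ∃ k : Fin n,
    (∀ i : Fin n, i < k → x i = y i) ∧
    (∃ t : Bool, (∀ i : Fin n, k ≤ i → typ (x i) = t) ∧
                 (∀ i : Fin n, k ≤ i → typ (y i) = !t)) ∧
    (∀ i : Fin n, k ≤ i → G.Adj (x i) (y i))

/-- The hierarchical graph `HM_n` on words of length `n` over the alphabet `Fin N`. -/
def HM (N : ℕ) (G : SimpleGraph (Fin N)) (typ : Fin N → Bool) (n : ℕ) :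
    SimpleGraph (Fin n → Fin N) :=
  SimpleGraph.fromRel (HMRel N G typ n)

section Aux

variable {N : ℕ} {G : SimpleGraph (Fin N)} {typ : Fin N → Bool} {n : ℕ}

lemma exists_adj (hconn : G.Connected) (hV1 : ∃ x, typ x = true) (hV2 : ∃ x, typ x = false)
    (c : Fin N) : ∃ d, G.Adj c d := by
  obtain ⟨p, hp⟩ := hV1
  obtain ⟨q, hq⟩ := hV2
  have hne : ∃ e : Fin N, e ≠ c := by
    by_cases h : p = c
    · refine ⟨q, fun hqc => ?_⟩
      rw [h] at hp; rw [hqc] at hq; rw [hp] at hq; simp at hq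
    · exact ⟨p, h⟩
  obtain ⟨e, he⟩ := hne
  obtain ⟨w⟩ := hconn c e
  cases w with
  | nil => exact absurd rfl he.symm
  | cons h _ => exact ⟨_, h⟩

lemma walk_parity (hbip : ∀ x y, G.Adj x y → typ x ≠ typ y) :
    ∀ {a b : Fin N} (p : G.Walk a b), (typ a = typ b ↔ Even p.length) := by
  intro a b p
  induction p with
  | nil => simp
  | @cons a c b h p ih =>
    have hne := hbip _ _ h
    simp only [SimpleGraph.Walk.length_cons, Nat.even_add_one, ← ih]
    revert hne
    cases typ a <;> cases typ c <;> cases typ b <;> simp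

lemma pad_walk (m : ℕ) : ∀ {a b d : Fin N} (p : G.Walk a b), G.Adj b d →
    ∃ q : G.Walk a b, q.length = p.length + 2 * m := by
  induction m with
  | zero => exact fun p _ => ⟨p, by ring⟩
  | succ m ih =>
    intro a b d p h
    obtain ⟨q, hq⟩ := ih ((p.concat h).concat h.symm) h
    refine ⟨q, ?_⟩
    simp only [SimpleGraph.Walk.length_concat] at hq
    omega

lemma exists_walk_of_length (hconn : G.Connected)
    (hbip : ∀ x y, G.Adj x y → typ x ≠ typ y)
    (hV1 : ∃ x, typ x = true) (hV2 : ∃ x, typ x = false) {a b : Fin N} {ℓ : ℕ}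
    (h1 : G.dist a b ≤ ℓ) (h2 : typ a = typ b ↔ Even ℓ) :
    ∃ p : G.Walk a b, p.length = ℓ := by
  obtain ⟨p, hp⟩ := hconn.exists_walk_length_eq_dist a b
  obtain ⟨d, hd⟩ := exists_adj hconn hV1 hV2 b
  have hple : p.length ≤ ℓ := by omega
  have hpar : Even (ℓ - p.length) := by
    rw [Nat.even_sub hple]
    constructor
    · intro h; exact (walk_parity hbip p).mp (h2.mpr h)
    · intro h; exact h2.mp ((walk_parity hbip p).mpr h)
  obtain ⟨m, hm⟩ := hpar
  obtain ⟨q, hq⟩ := pad_walk m p hd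
  exact ⟨q, by omega⟩

lemma hm_adj_struct {u v : Fin n → Fin N} (hx : (HM N G typ n).Adj u v) :
    ∃ k : Fin n, (∀ i : Fin n, i < k → u i = v i) ∧
      (∃ t : Bool, (∀ i : Fin n, k ≤ i → typ (u i) = t) ∧ (∀ i : Fin n, k ≤ i → typ (v i) = !t)) ∧
      (∀ i : Fin n, k ≤ i → G.Adj (u i) (v i)) := by
  rw [HM, SimpleGraph.fromRel_adj] at hx
  obtain ⟨hne, h | h⟩ := hx
  · exact h
  · obtain ⟨k, h1, ⟨t, h2, h3⟩, h4⟩ := h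
    exact ⟨k, fun i hi => (h1 i hi).symm, ⟨!t, h3, fun i hi => by simp [h2 i hi]⟩,
      fun i hi => (h4 i hi).symm⟩

lemma hm_adj_of {u v : Fin n → Fin N} (h : HMRel N G typ n u v) : (HM N G typ n).Adj u v := by
  obtain ⟨k, h1, h2, h4⟩ := h
  have hne : u ≠ v := fun he => (h4 k le_rfl).ne (by rw [he])
  rw [HM, SimpleGraph.fromRel_adj]
  exact ⟨hne, Or.inl ⟨k, h1, h2, h4⟩⟩

end Aux

section Aux2
variable {N : ℕ} {G : SimpleGraph (Fin N)} {typ : Fin N → Bool} {n : ℕ}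

lemma bool_flip {a b : Bool} (h : a ≠ b) : a = !b := by cases a <;> cases b <;> simp_all

lemma simul_walk (hbip : ∀ x y, G.Adj x y → typ x ≠ typ y) (hn : 0 < n) :
    ∀ (ℓ : ℕ) (z w : Fin n → Fin N) (t : Bool), (∀ i, typ (z i) = t) →
      (∀ i, ∃ p : G.Walk (z i) (w i), p.length = ℓ) →
      ∃ P : (HM N G typ n).Walk z w, P.length = ℓ := by
  intro ℓ
  induction ℓ with
  | zero =>
    intro z w t hz hw
    have hzw : z = w := funext fun i => by
      obtain ⟨p, hp⟩ := hw i; exact SimpleGraph.Walk.eq_of_length_eq_zero hp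
    subst hzw; exact ⟨.nil, rfl⟩
  | succ ℓ ih =>
    intro z w t hz hw
    have hstep : ∀ i, ∃ c, G.Adj (z i) c ∧ ∃ q : G.Walk c (w i), q.length = ℓ := by
      intro i
      obtain ⟨p, hp⟩ := hw i
      have hnil : ¬ p.Nil := by
        rw [SimpleGraph.Walk.not_nil_iff_lt_length]; omega
      obtain ⟨c, h, q, rfl⟩ := SimpleGraph.Walk.not_nil_iff.mp hnil
      exact ⟨c, h, q, by simpa using hp⟩
    choose z' hadj hq using hstep
    have hz' : ∀ i, typ (z' i) = !t := fun i => by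
      have h1 := hbip _ _ (hadj i)
      rw [hz i] at h1
      exact bool_flip (Ne.symm h1)
    have hA : (HM N G typ n).Adj z z' :=
      hm_adj_of ⟨⟨0, hn⟩, fun i hi => absurd hi (by simp [Fin.lt_def]),
        ⟨t, fun i _ => hz i, fun i _ => hz' i⟩, fun i _ => hadj i⟩
    obtain ⟨P, hP⟩ := ih z' w (!t) hz' hq
    exact ⟨.cons hA P, by simp [hP]⟩

lemma unify (hconn : G.Connected) (hbip : ∀ x y, G.Adj x y → typ x ≠ typ y)
    (hV1 : ∃ x, typ x = true) (hV2 : ∃ x, typ x = false) :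
    ∀ j : ℕ, j < n → ∀ x : Fin n → Fin N, ∀ t : Bool,
      (∀ i : Fin n, j ≤ (i : ℕ) → typ (x i) = t) →
      ∃ (z : Fin n → Fin N) (s : Bool), (∀ i, typ (z i) = s) ∧
        ∃ P : (HM N G typ n).Walk x z, P.length ≤ j := by
  intro j
  induction j with
  | zero => exact fun _ x t hx => ⟨x, t, fun i => hx i (Nat.zero_le _), .nil, le_rfl⟩
  | succ j ih =>
    intro hj x t hx
    have hjn : j < n := by omega
    by_cases hcase : typ (x ⟨j, hjn⟩) = t
    · obtain ⟨z, s, hz, P, hP⟩ := ih hjn x t (fun i hi => by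
        rcases Nat.lt_or_ge (i : ℕ) (j + 1) with h | h
        · have hij : i = ⟨j, hjn⟩ := Fin.ext (show (i:ℕ) = j by omega)
          rw [hij]; exact hcase
        · exact hx i h)
      exact ⟨z, s, hz, P, hP.trans (by omega)⟩
    · have hnba : ∀ c, G.Adj c ((exists_adj hconn hV1 hV2 c).choose) :=
        fun c => (exists_adj hconn hV1 hV2 c).choose_spec
      let nb : Fin N → Fin N := fun c => (exists_adj hconn hV1 hV2 c).choose
      let z : Fin n → Fin N := fun i => if j + 1 ≤ (i : ℕ) then nb (x i) else x i
      have hzlt : ∀ i : Fin n, (i : ℕ) < j + 1 → z i = x i := fun i hi => by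
        show (if j + 1 ≤ (i : ℕ) then nb (x i) else x i) = x i
        rw [if_neg (by omega)]
      have hzge : ∀ i : Fin n, j + 1 ≤ (i : ℕ) → z i = nb (x i) := fun i hi => by
        show (if j + 1 ≤ (i : ℕ) then nb (x i) else x i) = nb (x i)
        rw [if_pos hi]
      have htypnb : ∀ i : Fin n, j + 1 ≤ (i : ℕ) → typ (nb (x i)) = !t := by
        intro i hi
        have h1 := hbip _ _ (hnba (x i))
        rw [hx i hi] at h1
        exact bool_flip (Ne.symm h1)
      have hadj : (HM N G typ n).Adj x z := by
        refine hm_adj_of ⟨⟨j + 1, hj⟩, fun i hi => ?_, ⟨t, fun i hi => ?_, fun i hi => ?_⟩,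
          fun i hi => ?_⟩
        · rw [Fin.lt_def] at hi
          exact (hzlt i hi).symm
        · rw [Fin.le_def] at hi
          exact hx i hi
        · rw [Fin.le_def] at hi
          rw [hzge i hi]
          exact htypnb i hi
        · rw [Fin.le_def] at hi
          rw [hzge i hi]
          exact hnba (x i)
      have hz' : ∀ i : Fin n, j ≤ (i : ℕ) → typ (z i) = !t := by
        intro i hi
        rcases Nat.lt_or_ge (i : ℕ) (j + 1) with h | h
        · rw [hzlt i h]
          have hij : i = ⟨j, hjn⟩ := Fin.ext (show (i:ℕ) = j by omega)
          rw [hij]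
          exact bool_flip hcase
        · rw [hzge i h]
          exact htypnb i h
      obtain ⟨w, s, hw, P, hP⟩ := ih hjn z (!t) hz'
      exact ⟨w, s, hw, .cons hadj P, by simp only [SimpleGraph.Walk.length_cons]; omega⟩

end Aux2

section Aux3
variable {N : ℕ} {G : SimpleGraph (Fin N)} {typ : Fin N → Bool} {n : ℕ}

lemma ediam_ne_top_of_connected {V : Type*} [Finite V] [Nonempty V] {H : SimpleGraph V}
    (h : H.Connected) : H.ediam ≠ ⊤ := by
  obtain ⟨u, v, huv⟩ := H.exists_edist_eq_ediam_of_finite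
  rw [← huv]
  exact SimpleGraph.edist_ne_top_iff_reachable.mpr (h u v)

lemma hm_walk_le (hconn : G.Connected) (hbip : ∀ x y, G.Adj x y → typ x ≠ typ y)
    (hV1 : ∃ x, typ x = true) (hV2 : ∃ x, typ x = false) (hn : 0 < n)
    (x y : Fin n → Fin N) :
    ∃ P : (HM N G typ n).Walk x y, P.length ≤ 2 * (n - 1) + G.diam := by
  have hnm : n - 1 < n := by omega
  have hGtop : G.ediam ≠ ⊤ := by
    haveI : Nonempty (Fin N) := ⟨hV1.choose⟩
    exact ediam_ne_top_of_connected hconn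
  obtain ⟨x', s, hx', P1, hP1⟩ := unify hconn hbip hV1 hV2 (n-1) hnm x
    (typ (x ⟨n-1, hnm⟩)) (fun i hi => by
      have hij : i = ⟨n-1, hnm⟩ := Fin.ext (show (i:ℕ) = n-1 by omega)
      rw [hij])
  obtain ⟨y', s', hy', P2, hP2⟩ := unify hconn hbip hV1 hV2 (n-1) hnm y
    (typ (y ⟨n-1, hnm⟩)) (fun i hi => by
      have hij : i = ⟨n-1, hnm⟩ := Fin.ext (show (i:ℕ) = n-1 by omega)
      rw [hij])
  obtain ⟨i0, _, hi0⟩ := Finset.exists_max_image Finset.univ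
    (fun i : Fin n => G.dist (x' i) (y' i)) ⟨⟨0, hn⟩, Finset.mem_univ _⟩
  set ℓ := G.dist (x' i0) (y' i0) with hldef
  have hldiam : ℓ ≤ G.diam := SimpleGraph.dist_le_diam hGtop
  have hpar0 : (typ (x' i0) = typ (y' i0)) ↔ Even ℓ := by
    obtain ⟨p, hp⟩ := hconn.exists_walk_length_eq_dist (x' i0) (y' i0)
    rw [← hldef] at hp
    rw [← hp]
    exact walk_parity hbip p
  have hmid : ∀ i, ∃ p : G.Walk (x' i) (y' i), p.length = ℓ := by
    intro i
    refine exists_walk_of_length hconn hbip hV1 hV2 (hi0 i (Finset.mem_univ _)) ?_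
    rw [hx' i, hy' i, ← hx' i0, ← hy' i0]
    exact hpar0
  obtain ⟨Pm, hPm⟩ := simul_walk hbip hn ℓ x' y' s hx' hmid
  refine ⟨P1.append (Pm.append P2.reverse), ?_⟩
  simp only [SimpleGraph.Walk.length_append, SimpleGraph.Walk.length_reverse]
  omega

lemma hm_connected (hconn : G.Connected) (hbip : ∀ x y, G.Adj x y → typ x ≠ typ y)
    (hV1 : ∃ x, typ x = true) (hV2 : ∃ x, typ x = false) (hn : 0 < n) :
    (HM N G typ n).Connected := by
  haveI : Nonempty (Fin N) := ⟨hV1.choose⟩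
  rw [SimpleGraph.connected_iff]
  exact ⟨fun x y => ⟨(hm_walk_le hconn hbip hV1 hV2 hn x y).choose⟩, inferInstance⟩

end Aux3

def altCount {N : ℕ} (typ : Fin N → Bool) (n : ℕ) (hn : 0 < n) (z : Fin n → Fin N) : ℕ :=
  ((Finset.range (n-1)).filter (fun j =>
    typ (z ⟨j % n, Nat.mod_lt _ hn⟩) ≠ typ (z ⟨(j+1) % n, Nat.mod_lt _ hn⟩))).card

section Aux4
variable {N : ℕ} {G : SimpleGraph (Fin N)} {typ : Fin N → Bool} {n : ℕ}

lemma mod_id1 {j : ℕ} (hn : 0 < n) (hj : j < n - 1) : j % n = j := Nat.mod_eq_of_lt (by omega)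
lemma mod_id2 {j : ℕ} (hn : 0 < n) (hj : j < n - 1) : (j+1) % n = j + 1 := Nat.mod_eq_of_lt (by omega)

lemma altCount_eq_zero (hn : 0 < n) {z : Fin n → Fin N} {t : Bool}
    (hz : ∀ i, typ (z i) = t) : altCount typ n hn z = 0 := by
  rw [altCount, Finset.card_eq_zero, Finset.filter_eq_empty_iff]
  intro j _
  simp [hz]

lemma altCount_full (hn : 0 < n) {z : Fin n → Fin N}
    (hz : ∀ j : ℕ, ∀ h1 : j < n - 1, typ (z ⟨j, by omega⟩) ≠ typ (z ⟨j+1, by omega⟩)) :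
    altCount typ n hn z = n - 1 := by
  rw [altCount]
  rw [Finset.filter_true_of_mem, Finset.card_range]
  intro j hj
  rw [Finset.mem_range] at hj
  have e1 : (⟨j % n, Nat.mod_lt _ hn⟩ : Fin n) = ⟨j, by omega⟩ := Fin.ext (mod_id1 hn hj)
  have e2 : (⟨(j+1) % n, Nat.mod_lt _ hn⟩ : Fin n) = ⟨j+1, by omega⟩ := Fin.ext (mod_id2 hn hj)
  rw [e1, e2]
  exact hz j hj

lemma filter_card_aux {p q : ℕ → Prop} [DecidablePred p] [DecidablePred q]
    {s : Finset ℕ} {m : ℕ} (h : ∀ j ∈ s, p j → j = m ∨ q j) :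
    (s.filter p).card ≤ (s.filter q).card + 1 := by
  have hsub : s.filter p ⊆ insert m (s.filter q) := by
    intro j hj
    rw [Finset.mem_filter] at hj
    rcases h j hj.1 hj.2 with h1 | h1
    · rw [h1]; exact Finset.mem_insert_self _ _
    · exact Finset.mem_insert_of_mem (Finset.mem_filter.mpr ⟨hj.1, h1⟩)
  calc (s.filter p).card ≤ (insert m (s.filter q)).card := Finset.card_le_card hsub
    _ ≤ (s.filter q).card + 1 := Finset.card_insert_le _ _

set_option maxHeartbeats 1000000 in
lemma altCount_lipschitz (hn : 0 < n) {u v : Fin n → Fin N}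
    (h : (HM N G typ n).Adj u v) :
    altCount typ n hn u ≤ altCount typ n hn v + 1 := by
  obtain ⟨k, hpre, ⟨t, htu, htv⟩, hGadj⟩ := hm_adj_struct h
  rw [altCount, altCount]
  refine filter_card_aux (m := (k : ℕ) - 1) ?_
  intro j hjr hjb
  rw [Finset.mem_range] at hjr
  have e1 : (⟨j % n, Nat.mod_lt _ hn⟩ : Fin n) = ⟨j, by omega⟩ := Fin.ext (mod_id1 hn hjr)
  have e2 : (⟨(j+1) % n, Nat.mod_lt _ hn⟩ : Fin n) = ⟨j+1, by omega⟩ := Fin.ext (mod_id2 hn hjr)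
  rw [e1, e2] at hjb
  by_cases hk1 : (k : ℕ) ≤ j
  · exfalso
    apply hjb
    rw [htu ⟨j, by omega⟩ (by rw [Fin.le_def]; exact hk1),
        htu ⟨j+1, by omega⟩ (by rw [Fin.le_def]; simp; omega)]
  · by_cases hk2 : j + 1 < (k : ℕ)
    · right
      rw [e1, e2]
      rw [← hpre ⟨j, by omega⟩ (by rw [Fin.lt_def]; simp; omega),
          ← hpre ⟨j+1, by omega⟩ (by rw [Fin.lt_def]; simp; omega)]
      exact hjb
    · left; omega

lemma hm_adj_zero (hn : 0 < n) {u v : Fin n → Fin N}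
    (h : (HM N G typ n).Adj u v) (hne : u ⟨0, hn⟩ ≠ v ⟨0, hn⟩) :
    altCount typ n hn u = 0 ∧ altCount typ n hn v = 0 ∧ G.Adj (u ⟨0, hn⟩) (v ⟨0, hn⟩) := by
  obtain ⟨k, hpre, ⟨t, htu, htv⟩, hGadj⟩ := hm_adj_struct h
  have hk0 : (k : ℕ) = 0 := by
    by_contra hk
    exact hne (hpre ⟨0, hn⟩ (by rw [Fin.lt_def]; simp; omega))
  have hall : ∀ i : Fin n, k ≤ i := fun i => by rw [Fin.le_def, hk0]; omega
  exact ⟨altCount_eq_zero hn (fun i => htu i (hall i)),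
    altCount_eq_zero hn (fun i => htv i (hall i)), hGadj _ (hall _)⟩

lemma walk_lower {V : Type*} {H : SimpleGraph V} (f : V → ℕ)
    (hf : ∀ u v, H.Adj u v → f u ≤ f v + 1) :
    ∀ {x y : V} (p : H.Walk x y), f x ≤ f y + p.length := by
  intro x y p
  induction p with
  | nil => simp
  | @cons a c b h p ih =>
    have h1 := hf _ _ h
    simp only [SimpleGraph.Walk.length_cons]
    omega

end Aux4


/-- For a connected bipartite base graph `G` (with bipartition given by
`typ`, both parts nonempty), the diameter of `HM_n` equals `2(n-1) + diam(G)` for all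
`n ≥ 1`. -/
theorem hm_diam (N : ℕ) (G : SimpleGraph (Fin N)) (typ : Fin N → Bool)
    (hconn : G.Connected)
    (hbip : ∀ x y : Fin N, G.Adj x y → typ x ≠ typ y)
    (hV1 : ∃ x, typ x = true) (hV2 : ∃ x, typ x = false)
    (n : ℕ) (hn : 1 ≤ n) :
    (HM N G typ n).diam = 2 * (n - 1) + G.diam := by
  have hn0 : 0 < n := hn
  haveI : Nonempty (Fin N) := ⟨hV1.choose⟩
  have hGtop : G.ediam ≠ ⊤ := ediam_ne_top_of_connected hconn
  obtain ⟨pv, hpv⟩ := hV1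
  obtain ⟨qv, hqv⟩ := hV2
  have hV1' : ∃ x, typ x = true := ⟨pv, hpv⟩
  have hV2' : ∃ x, typ x = false := ⟨qv, hqv⟩
  have hpq : pv ≠ qv := fun h => by rw [h, hqv] at hpv; simp at hpv
  have hdiam1 : 1 ≤ G.diam :=
    le_trans (hconn.pos_dist_of_ne hpq) (SimpleGraph.dist_le_diam hGtop)
  obtain ⟨a, b, hab⟩ := G.exists_dist_eq_diam
  have hane : a ≠ b := by
    intro h
    rw [h, SimpleGraph.dist_self] at hab
    omega
  set rep : Bool → Fin N := fun s => bif s then pv else qv with hrepdef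
  have hrep : ∀ s, typ (rep s) = s := fun s => by cases s <;> simp [hrepdef, hpv, hqv]
  set xs : Fin n → Fin N :=
    fun i => if (i : ℕ) = 0 then a else rep (xor (decide ((i : ℕ) % 2 = 1)) (typ a)) with hxsdef
  set ys : Fin n → Fin N :=
    fun i => if (i : ℕ) = 0 then b else rep (xor (decide ((i : ℕ) % 2 = 1)) (typ b)) with hysdef
  have hxst : ∀ i : Fin n, typ (xs i) = xor (decide ((i : ℕ) % 2 = 1)) (typ a) := by
    intro i
    by_cases h : (i : ℕ) = 0
    · simp [hxsdef, h]
    · simp [hxsdef, h, hrep]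
  have hyst : ∀ i : Fin n, typ (ys i) = xor (decide ((i : ℕ) % 2 = 1)) (typ b) := by
    intro i
    by_cases h : (i : ℕ) = 0
    · simp [hysdef, h]
    · simp [hysdef, h, hrep]
  have haltaux : ∀ (c : Bool) (j : ℕ),
      xor (decide (j % 2 = 1)) c ≠ xor (decide ((j + 1) % 2 = 1)) c := by
    intro c j
    rcases Nat.mod_two_eq_zero_or_one j with h | h
    · have h' : (j + 1) % 2 = 1 := by omega
      simp [h, h']
    · have h' : (j + 1) % 2 = 0 := by omega
      simp [h, h']
  have hxsalt : altCount typ n hn0 xs = n - 1 := by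
    refine altCount_full hn0 (fun j h1 => ?_)
    rw [hxst, hxst]
    exact haltaux (typ a) j
  have hysalt : altCount typ n hn0 ys = n - 1 := by
    refine altCount_full hn0 (fun j h1 => ?_)
    rw [hyst, hyst]
    exact haltaux (typ b) j
  set A := altCount typ n hn0 with hAdef
  set f : (Fin n → Fin N) → ℕ := fun u =>
    if u ⟨0, hn0⟩ = b then (n - 1) - A u else G.dist (u ⟨0, hn0⟩) b + A u + (n - 1) with hfdef
  have hf : ∀ u v, (HM N G typ n).Adj u v → f u ≤ f v + 1 := by
    intro u v huv
    have hlip1 : A u ≤ A v + 1 := altCount_lipschitz hn0 huv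
    have hlip2 : A v ≤ A u + 1 := altCount_lipschitz hn0 huv.symm
    by_cases h0 : u ⟨0, hn0⟩ = v ⟨0, hn0⟩
    · simp only [hfdef]
      rw [h0]
      by_cases hb : v ⟨0, hn0⟩ = b
      · rw [if_pos hb, if_pos hb]; omega
      · rw [if_neg hb, if_neg hb]; omega
    · obtain ⟨hAu, hAv, hGadj⟩ := hm_adj_zero hn0 huv h0
      have hAu' : A u = 0 := hAu
      have hAv' : A v = 0 := hAv
      have hd1 : G.dist (u ⟨0, hn0⟩) (v ⟨0, hn0⟩) ≤ 1 := by
        have := SimpleGraph.dist_le hGadj.toWalk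
        simpa using this
      have hdistle : G.dist (u ⟨0, hn0⟩) b ≤ G.dist (v ⟨0, hn0⟩) b + 1 := by
        have ht := hconn.dist_triangle (v := v ⟨0, hn0⟩) (u := u ⟨0, hn0⟩) (w := b)
        omega
      simp only [hfdef]
      by_cases hub : u ⟨0, hn0⟩ = b <;> by_cases hvb : v ⟨0, hn0⟩ = b
      · exact absurd (hub.trans hvb.symm) h0
      · rw [if_pos hub, if_neg hvb]; omega
      · rw [if_neg hub, if_pos hvb]
        have hz : G.dist (v ⟨0, hn0⟩) b = 0 := by rw [hvb]; exact SimpleGraph.dist_self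
        omega
      · rw [if_neg hub, if_neg hvb]; omega
  have hxs0 : xs ⟨0, hn0⟩ = a := by simp [hxsdef]
  have hys0 : ys ⟨0, hn0⟩ = b := by simp [hysdef]
  have hfx : f xs = 2 * (n - 1) + G.diam := by
    simp only [hfdef]
    rw [hxs0, if_neg hane]
    have : A xs = n - 1 := hxsalt
    omega
  have hfy : f ys = 0 := by
    simp only [hfdef]
    rw [hys0, if_pos rfl]
    have : A ys = n - 1 := hysalt
    omega
  have hHMconn := hm_connected hconn hbip hV1' hV2' hn0
  have hHMtop : (HM N G typ n).ediam ≠ ⊤ := ediam_ne_top_of_connected hHMconn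
  apply le_antisymm
  · obtain ⟨u, v, huv⟩ := (HM N G typ n).exists_dist_eq_diam
    rw [← huv]
    obtain ⟨P, hP⟩ := hm_walk_le hconn hbip hV1' hV2' hn0 u v
    exact le_trans (SimpleGraph.dist_le P) hP
  · obtain ⟨P, hP⟩ := hHMconn.exists_walk_length_eq_dist xs ys
    have hlow := walk_lower f hf P
    calc 2 * (n - 1) + G.diam = f xs := hfx.symm
      _ ≤ (HM N G typ n).dist xs ys := by omega
      _ ≤ (HM N G typ n).diam := SimpleGraph.dist_le_diam hHMtop
end

section
/- Let G be a connected bipartite graph on N vertices, HM_n the associated hierarchical graph sequence, and ℓ_k := diam(HM_k) + 1. Then for all k ≥ n one has N_B^n(ℓ_k) = 1, and for all n > k one has N_B^n(ℓ_k) ≤ N^{n−k}. -/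
open Filter Finset

section Aux

variable {N : ℕ} {G : SimpleGraph (Fin N)} {typ : Fin N → Bool}

lemma HM_adj {n : ℕ} {x y : Fin n → Fin N} :
    (HM N G typ n).Adj x y ↔ x ≠ y ∧ (HMRel N G typ n x y ∨ HMRel N G typ n y x) :=
  SimpleGraph.fromRel_adj _ x y

lemma exists_nbr (hconn : G.Connected) (hbip : ∀ x y : Fin N, G.Adj x y → typ x ≠ typ y)
    (hV1 : ∃ x, typ x = true) (hV2 : ∃ x, typ x = false) (v : Fin N) :
    ∃ w, G.Adj v w ∧ typ w = !typ v := by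
  obtain ⟨u, hu⟩ : ∃ u, typ u ≠ typ v := by
    cases hv : typ v
    · obtain ⟨x, hx⟩ := hV1; exact ⟨x, by simp [hx]⟩
    · obtain ⟨x, hx⟩ := hV2; exact ⟨x, by simp [hx]⟩
  obtain ⟨W⟩ := hconn.preconnected v u
  cases W with
  | nil => exact absurd rfl hu.symm
  | cons h _ =>
    rename_i b _
    refine ⟨b, h, ?_⟩
    have := hbip v b h
    cases hb : typ b <;> cases hv : typ v <;> simp_all

end Aux

section Aux2

variable {N : ℕ} {G : SimpleGraph (Fin N)} {typ : Fin N → Bool}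
variable (hconn : G.Connected) (hbip : ∀ x y : Fin N, G.Adj x y → typ x ≠ typ y)
variable (hV1 : ∃ x, typ x = true) (hV2 : ∃ x, typ x = false)

lemma purify (hconn : G.Connected) (hbip : ∀ x y : Fin N, G.Adj x y → typ x ≠ typ y)
    (hV1 : ∃ x, typ x = true) (hV2 : ∃ x, typ x = false) {n : ℕ} : ∀ (m j : ℕ), n ≤ j + m → ∀ (x : Fin n → Fin N) (t : Bool),
    ∃ z, (HM N G typ n).Reachable x z ∧ (∀ i : Fin n, (i : ℕ) < j → z i = x i) ∧
      (∀ i : Fin n, j ≤ (i : ℕ) → typ (z i) = t) := by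
  intro m
  induction m with
  | zero =>
    intro j hj x t
    exact ⟨x, by rfl, fun i _ => rfl, fun i hi => absurd i.isLt (by omega)⟩
  | succ m ih =>
    intro j hj x t
    by_cases hjn : n ≤ j
    · exact ⟨x, by rfl, fun i _ => rfl, fun i hi => absurd i.isLt (by omega)⟩
    · push_neg at hjn
      set jf : Fin n := ⟨j, hjn⟩ with hjf
      by_cases ht : typ (x jf) = t
      · obtain ⟨z, hr, hpre, htyp⟩ := ih (j + 1) (by omega) x t
        refine ⟨z, hr, fun i hi => hpre i (by omega), fun i hi => ?_⟩
        rcases eq_or_lt_of_le hi with h | h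
        · have hij : i = jf := by apply Fin.ext; simp [hjf, ← h]
          rw [hij, hpre jf (by simp [hjf])]
          exact ht
        · exact htyp i (by omega)
      · have ht' : typ (x jf) = !t := by
          cases h1 : typ (x jf) <;> cases t <;> simp_all
        obtain ⟨z, hr, hpre, htyp⟩ := ih (j + 1) (by omega) x (!t)
        have hz : ∀ i : Fin n, j ≤ (i : ℕ) → typ (z i) = !t := by
          intro i hi
          rcases eq_or_lt_of_le hi with h | h
          · have hij : i = jf := by apply Fin.ext; simp [hjf, ← h]
            rw [hij, hpre jf (by simp [hjf])]; exact ht'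
          · exact htyp i (by omega)
        choose nb hnb htnb using exists_nbr hconn hbip hV1 hV2
        set w : Fin n → Fin N := fun i => if j ≤ (i : ℕ) then nb (z i) else z i with hw
        have hwj : ∀ i : Fin n, j ≤ (i : ℕ) → typ (w i) = t := by
          intro i hi
          simp only [hw, if_pos hi]
          rw [htnb (z i), hz i hi, Bool.not_not]
        have hadj : (HM N G typ n).Adj z w := by
          rw [HM_adj]
          constructor
          · intro he
            have h2 := congrFun he jf
            have h3 : typ (z jf) = !t := hz jf (by simp [hjf])
            have h4 : typ (w jf) = t := hwj jf (by simp [hjf])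
            rw [h2, h4] at h3
            exact Bool.self_ne_not t h3
          · refine Or.inl ⟨jf, fun i hi => ?_, ⟨!t, fun i hi => hz i hi, fun i hi => ?_⟩,
              fun i hi => ?_⟩
            · have : ¬ j ≤ (i : ℕ) := by have := Fin.lt_def.mp hi; simp [hjf] at this; omega
              simp [hw, if_neg this]
            · rw [hwj i (Fin.le_def.mp hi), Bool.not_not]
            · have : j ≤ (i : ℕ) := Fin.le_def.mp hi
              simp only [hw, if_pos this]
              exact hnb (z i)
        refine ⟨w, hr.trans hadj.reachable, fun i hi => ?_, hwj⟩
        have : ¬ j ≤ (i : ℕ) := by omega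
        simp only [hw, if_neg this]
        exact hpre i (by omega)

end Aux2

section Aux3

variable {N : ℕ} {G : SimpleGraph (Fin N)} {typ : Fin N → Bool}

lemma moveOne (hconn : G.Connected) (hbip : ∀ x y : Fin N, G.Adj x y → typ x ≠ typ y)
    (hV1 : ∃ x, typ x = true) (hV2 : ∃ x, typ x = false) {n : ℕ} (j : ℕ) (hjn : j < n)
    (x : Fin n → Fin N) (b : Fin N) (hab : G.Adj (x ⟨j, hjn⟩) b) :
    ∃ z, (HM N G typ n).Reachable x z ∧ (∀ i : Fin n, (i : ℕ) < j → z i = x i) ∧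
      z ⟨j, hjn⟩ = b := by
  set jf : Fin n := ⟨j, hjn⟩ with hjf
  set t : Bool := typ (x jf) with htdef
  obtain ⟨y, hr, hpre, htyp⟩ := purify hconn hbip hV1 hV2 n (j + 1) (by omega) x t
  have hyj : ∀ i : Fin n, j ≤ (i : ℕ) → typ (y i) = t := by
    intro i hi
    rcases eq_or_lt_of_le hi with h | h
    · have hij : i = jf := by apply Fin.ext; simp [hjf, ← h]
      rw [hij, hpre jf (by simp [hjf])]
    · exact htyp i (by omega)
  have htb : typ b = !t := by
    have h1 := hbip _ _ hab
    rw [← htdef] at h1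
    cases h2 : typ b <;> cases h3 : t <;> simp_all
  choose nb hnb htnb using exists_nbr hconn hbip hV1 hV2
  set w : Fin n → Fin N := fun i =>
    if (i : ℕ) < j then y i else if (i : ℕ) = j then b else nb (y i) with hw
  have hwj : ∀ i : Fin n, j ≤ (i : ℕ) → typ (w i) = !t := by
    intro i hi
    rcases eq_or_lt_of_le hi with h | h
    · simp only [hw, if_neg (by omega : ¬ (i:ℕ) < j), if_pos h.symm]
      exact htb
    · simp only [hw, if_neg (by omega : ¬ (i:ℕ) < j), if_neg (by omega : ¬ (i:ℕ) = j)]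
      rw [htnb, hyj i hi]
  have hadj : (HM N G typ n).Adj y w := by
    rw [HM_adj]
    constructor
    · intro he
      have h2 := congrFun he jf
      have h3 := hyj jf (le_refl j)
      have h4 := hwj jf (le_refl j)
      rw [h2, h4] at h3
      exact Bool.self_ne_not t h3.symm
    · refine Or.inl ⟨jf, fun i hi => ?_, ⟨t, fun i hi => hyj i (Fin.le_def.mp hi),
        fun i hi => hwj i (Fin.le_def.mp hi)⟩, fun i hi => ?_⟩
      · have h5 : (i : ℕ) < j := Fin.lt_def.mp hi
        simp [hw, if_pos h5]
      · have h5 : j ≤ (i : ℕ) := Fin.le_def.mp hi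
        rcases eq_or_lt_of_le h5 with h | h
        · have hij : i = jf := by apply Fin.ext; simp [hjf, ← h]
          simp only [hw, hij]
          simp only [hjf, if_neg (by omega : ¬ j < j), if_pos rfl]
          have : y jf = x jf := hpre jf (by simp [hjf])
          rw [this]; exact hab
        · simp only [hw, if_neg (by omega : ¬ (i:ℕ) < j), if_neg (by omega : ¬ (i:ℕ) = j)]
          exact hnb (y i)
  refine ⟨w, hr.trans hadj.reachable, fun i hi => ?_, ?_⟩
  · simp only [hw, if_pos hi]
    exact hpre i (by omega)
  · simp [hw, hjf]

lemma moveWalk (hconn : G.Connected) (hbip : ∀ x y : Fin N, G.Adj x y → typ x ≠ typ y)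
    (hV1 : ∃ x, typ x = true) (hV2 : ∃ x, typ x = false) {n : ℕ} (j : ℕ) (hjn : j < n) :
    ∀ (a c : Fin N) (_ : G.Walk a c) (x : Fin n → Fin N) (_ : x ⟨j, hjn⟩ = a),
    ∃ z, (HM N G typ n).Reachable x z ∧ (∀ i : Fin n, (i : ℕ) < j → z i = x i) ∧
      z ⟨j, hjn⟩ = c := by
  intro a c W
  induction W with
  | nil => exact fun x hx => ⟨x, by rfl, fun _ _ => rfl, hx⟩
  | cons h p ih =>
    intro x hx
    rename_i u v _
    obtain ⟨z1, hr1, hp1, hz1⟩ := moveOne hconn hbip hV1 hV2 j hjn x v (hx ▸ h)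
    obtain ⟨z2, hr2, hp2, hz2⟩ := ih z1 hz1
    exact ⟨z2, hr1.trans hr2, fun i hi => (hp2 i hi).trans (hp1 i hi), hz2⟩

lemma reach (hconn : G.Connected) (hbip : ∀ x y : Fin N, G.Adj x y → typ x ≠ typ y)
    (hV1 : ∃ x, typ x = true) (hV2 : ∃ x, typ x = false) {n : ℕ} :
    ∀ (m j : ℕ), n ≤ j + m → ∀ x y : Fin n → Fin N,
    (∀ i : Fin n, (i : ℕ) < j → x i = y i) → (HM N G typ n).Reachable x y := by
  intro m
  induction m with
  | zero =>
    intro j hj x y hxy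
    have : x = y := funext fun i => hxy i (by omega)
    rw [this]
  | succ m ih =>
    intro j hj x y hxy
    by_cases hjn : j < n
    · set jf : Fin n := ⟨j, hjn⟩ with hjf
      obtain ⟨W⟩ := hconn.preconnected (x jf) (y jf)
      obtain ⟨z, hr, hp, hz⟩ := moveWalk hconn hbip hV1 hV2 j hjn _ _ W x rfl
      refine hr.trans (ih (j + 1) (by omega) z y fun i hi => ?_)
      rcases Nat.lt_or_ge (i : ℕ) j with h | h
      · rw [hp i h]; exact hxy i h
      · have hij : i = jf := Fin.ext (by simp [hjf]; omega)
        rw [hij, hz]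
    · have : x = y := funext fun i => hxy i (by omega)
      rw [this]

end Aux3

section Aux4

variable {N : ℕ} {G : SimpleGraph (Fin N)} {typ : Fin N → Bool}

lemma HM_connected (hconn : G.Connected) (hbip : ∀ x y : Fin N, G.Adj x y → typ x ≠ typ y)
    (hV1 : ∃ x, typ x = true) (hV2 : ∃ x, typ x = false) (n : ℕ) :
    (HM N G typ n).Connected := by
  have hN : Nonempty (Fin N) := ⟨hV1.choose⟩
  have : Nonempty (Fin n → Fin N) := ⟨fun _ => Classical.arbitrary _⟩
  exact ⟨fun x y => reach hconn hbip hV1 hV2 n 0 (by omega) x y fun i hi => absurd hi (by omega)⟩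

lemma HM_ediam_ne_top (hconn : G.Connected) (hbip : ∀ x y : Fin N, G.Adj x y → typ x ≠ typ y)
    (hV1 : ∃ x, typ x = true) (hV2 : ∃ x, typ x = false) (n : ℕ) :
    (HM N G typ n).ediam ≠ ⊤ := by
  have hN : Nonempty (Fin N) := ⟨hV1.choose⟩
  have : Nonempty (Fin n → Fin N) := ⟨fun _ => Classical.arbitrary _⟩
  obtain ⟨u, v, huv⟩ := SimpleGraph.exists_edist_eq_ediam_of_finite (G := HM N G typ n)
  rw [← huv]
  exact SimpleGraph.edist_ne_top_iff_reachable.mpr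
    ((HM_connected hconn hbip hV1 hV2 n).preconnected u v)

/-- projection keeping the last `n` of `k` letters -/
def projW (N n k : ℕ) (h : n ≤ k) (x : Fin k → Fin N) : Fin n → Fin N :=
  fun i => x ⟨(i : ℕ) + (k - n), by have := i.isLt; omega⟩

/-- extension by a prefix `p` of length `n - k` -/
def embW (N n k : ℕ) (h : k ≤ n) (p : Fin (n - k) → Fin N) (x : Fin k → Fin N) :
    Fin n → Fin N :=
  fun i => if hi : (i : ℕ) < n - k then p ⟨i, hi⟩ else x ⟨(i : ℕ) - (n - k), by
    have := i.isLt; omega⟩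

lemma HMRel_proj {n k : ℕ} (hn : 1 ≤ n) (hnk : n ≤ k) {x y : Fin k → Fin N}
    (h : HMRel N G typ k x y) : HMRel N G typ n (projW N n k hnk x) (projW N n k hnk y) := by
  obtain ⟨k', hpre, ⟨t, htx, hty⟩, hedge⟩ := h
  have hk' := k'.isLt
  refine ⟨⟨(k' : ℕ) - (k - n), by omega⟩, fun i hi => ?_, ⟨t, fun i hi => ?_, fun i hi => ?_⟩,
    fun i hi => ?_⟩
  · have h1 : (i : ℕ) < (k' : ℕ) - (k - n) := Fin.lt_def.mp hi
    exact hpre ⟨(i : ℕ) + (k - n), by have := i.isLt; omega⟩ (Fin.lt_def.mpr (by simp; omega))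
  · have h1 : (k' : ℕ) - (k - n) ≤ (i : ℕ) := Fin.le_def.mp hi
    exact htx ⟨(i : ℕ) + (k - n), by have := i.isLt; omega⟩ (Fin.le_def.mpr (by simp; omega))
  · have h1 : (k' : ℕ) - (k - n) ≤ (i : ℕ) := Fin.le_def.mp hi
    exact hty ⟨(i : ℕ) + (k - n), by have := i.isLt; omega⟩ (Fin.le_def.mpr (by simp; omega))
  · have h1 : (k' : ℕ) - (k - n) ≤ (i : ℕ) := Fin.le_def.mp hi
    exact hedge ⟨(i : ℕ) + (k - n), by have := i.isLt; omega⟩ (Fin.le_def.mpr (by simp; omega))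

lemma HMRel_ne_proj {n k : ℕ} (hn : 1 ≤ n) (hnk : n ≤ k) {x y : Fin k → Fin N}
    (h : HMRel N G typ k x y) : projW N n k hnk x ≠ projW N n k hnk y := by
  obtain ⟨k', hpre, ⟨t, htx, hty⟩, hedge⟩ := h
  have hk' := k'.isLt
  intro he
  have h2 := congrFun he ⟨n - 1, by omega⟩
  set I : Fin k := ⟨n - 1 + (k - n), by omega⟩ with hI
  have h3 : typ (x I) = t := htx I (Fin.le_def.mpr (by simp [hI]; omega))
  have h4 : typ (y I) = !t := hty I (Fin.le_def.mpr (by simp [hI]; omega))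
  have : x I = y I := h2
  rw [this, h4] at h3
  exact Bool.self_ne_not t h3.symm

lemma HM_adj_proj {n k : ℕ} (hn : 1 ≤ n) (hnk : n ≤ k) {x y : Fin k → Fin N}
    (h : (HM N G typ k).Adj x y) :
    (HM N G typ n).Adj (projW N n k hnk x) (projW N n k hnk y) := by
  rw [HM_adj] at h ⊢
  obtain ⟨-, h | h⟩ := h
  · exact ⟨HMRel_ne_proj hn hnk h, Or.inl (HMRel_proj hn hnk h)⟩
  · exact ⟨(HMRel_ne_proj hn hnk h).symm, Or.inr (HMRel_proj hn hnk h)⟩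

lemma HMRel_emb {n k : ℕ} (hk : k ≤ n) (p : Fin (n - k) → Fin N) {x y : Fin k → Fin N}
    (h : HMRel N G typ k x y) :
    HMRel N G typ n (embW N n k hk p x) (embW N n k hk p y) := by
  obtain ⟨k', hpre, ⟨t, htx, hty⟩, hedge⟩ := h
  have hk' := k'.isLt
  refine ⟨⟨(k' : ℕ) + (n - k), by omega⟩, fun i hi => ?_, ⟨t, fun i hi => ?_, fun i hi => ?_⟩,
    fun i hi => ?_⟩
  · have h1 : (i : ℕ) < (k' : ℕ) + (n - k) := Fin.lt_def.mp hi
    by_cases h2 : (i : ℕ) < n - k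
    · simp [embW, dif_pos h2]
    · simp only [embW, dif_neg h2]
      exact hpre ⟨(i : ℕ) - (n - k), by have := i.isLt; omega⟩ (Fin.lt_def.mpr (by simp; omega))
  · have h1 : (k' : ℕ) + (n - k) ≤ (i : ℕ) := Fin.le_def.mp hi
    simp only [embW, dif_neg (by omega : ¬ (i : ℕ) < n - k)]
    exact htx _ (Fin.le_def.mpr (by simp; omega))
  · have h1 : (k' : ℕ) + (n - k) ≤ (i : ℕ) := Fin.le_def.mp hi
    simp only [embW, dif_neg (by omega : ¬ (i : ℕ) < n - k)]
    exact hty _ (Fin.le_def.mpr (by simp; omega))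
  · have h1 : (k' : ℕ) + (n - k) ≤ (i : ℕ) := Fin.le_def.mp hi
    simp only [embW, dif_neg (by omega : ¬ (i : ℕ) < n - k)]
    exact hedge _ (Fin.le_def.mpr (by simp; omega))

lemma embW_ne {n k : ℕ} (hk : k ≤ n) (p : Fin (n - k) → Fin N) {x y : Fin k → Fin N}
    (h : x ≠ y) : embW N n k hk p x ≠ embW N n k hk p y := by
  intro he
  apply h
  funext i
  have h2 := congrFun he ⟨(i : ℕ) + (n - k), by have := i.isLt; omega⟩
  simp only [embW, dif_neg (by omega : ¬ (i : ℕ) + (n - k) < n - k)] at h2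
  simp only [Nat.add_sub_cancel] at h2
  exact h2

lemma HM_adj_emb {n k : ℕ} (hk : k ≤ n) (p : Fin (n - k) → Fin N) {x y : Fin k → Fin N}
    (h : (HM N G typ k).Adj x y) :
    (HM N G typ n).Adj (embW N n k hk p x) (embW N n k hk p y) := by
  rw [HM_adj] at h ⊢
  obtain ⟨hne, h | h⟩ := h
  · exact ⟨embW_ne hk p hne, Or.inl (HMRel_emb hk p h)⟩
  · exact ⟨embW_ne hk p hne, Or.inr (HMRel_emb hk p h)⟩

lemma projW_embW {n k : ℕ} (hk : k ≤ n) (p : Fin (n - k) → Fin N) (x : Fin k → Fin N) :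
    projW N k n hk (embW N n k hk p x) = x := by
  funext i
  simp only [projW, embW, dif_neg (by omega : ¬ (i : ℕ) + (n - k) < n - k)]
  congr 1
  exact Fin.ext (by simp)

end Aux4

section Main

variable {N : ℕ} {G : SimpleGraph (Fin N)} {typ : Fin N → Bool}

lemma dist_le_diam_lift (hconn : G.Connected) (hbip : ∀ x y : Fin N, G.Adj x y → typ x ≠ typ y)
    (hV1 : ∃ x, typ x = true) (hV2 : ∃ x, typ x = false) {n k : ℕ} (hnk : n ≤ k)
    (u v : Fin n → Fin N) : (HM N G typ n).dist u v ≤ (HM N G typ k).diam := by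
  rcases Nat.eq_zero_or_pos n with h0 | hn
  · subst h0
    have : u = v := funext fun i => i.elim0
    rw [this, SimpleGraph.dist_self]
    exact Nat.zero_le _
  · have hN : Nonempty (Fin N) := ⟨hV1.choose⟩
    set a := Classical.arbitrary (Fin N)
    set U := embW N k n hnk (fun _ => a) u with hU
    set V := embW N k n hnk (fun _ => a) v with hV
    have hr : (HM N G typ k).Reachable U V :=
      (HM_connected hconn hbip hV1 hV2 k).preconnected U V
    obtain ⟨W, hW⟩ := hr.exists_walk_length_eq_dist
    let ι : HM N G typ k →g HM N G typ n :=
      ⟨projW N n k hnk, fun {a b} h => HM_adj_proj hn hnk h⟩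
    have hWu : ι U = u := by
      show projW N n k hnk U = u
      rw [hU]; exact projW_embW hnk _ u
    have hWv : ι V = v := by
      show projW N n k hnk V = v
      rw [hV]; exact projW_embW hnk _ v
    calc (HM N G typ n).dist u v ≤ ((W.map ι).copy hWu hWv).length := SimpleGraph.dist_le _
      _ = W.length := by rw [SimpleGraph.Walk.length_copy, SimpleGraph.Walk.length_map]
      _ = (HM N G typ k).dist U V := hW
      _ ≤ (HM N G typ k).diam :=
          SimpleGraph.dist_le_diam (HM_ediam_ne_top hconn hbip hV1 hV2 k)

theorem hm_boxing_upper' (N : ℕ) (G : SimpleGraph (Fin N)) (typ : Fin N → Bool)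
    (hconn : G.Connected)
    (hbip : ∀ x y : Fin N, G.Adj x y → typ x ≠ typ y)
    (hV1 : ∃ x, typ x = true) (hV2 : ∃ x, typ x = false)
    (n : ℕ) :
    (∀ k : ℕ, n ≤ k →
      coveringNumber (HM N G typ n) ((HM N G typ k).diam + 1) = 1) ∧
    (∀ k : ℕ, k < n →
      coveringNumber (HM N G typ n) ((HM N G typ k).diam + 1) ≤ N ^ (n - k)) := by
  classical
  have hN : Nonempty (Fin N) := ⟨hV1.choose⟩
  have hNn : ∀ m : ℕ, Nonempty (Fin m → Fin N) := fun m => ⟨fun _ => Classical.arbitrary _⟩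
  constructor
  · -- part 1
    intro k hk
    have hbox : (HM N G typ n).IsBox ((HM N G typ k).diam + 1) ⊤ := by
      intro u v
      let ι : HM N G typ n →g (⊤ : (HM N G typ n).Subgraph).coe :=
        ⟨fun x => ⟨x, trivial⟩, fun {a b} h => by
          show (⊤ : (HM N G typ n).Subgraph).Adj a b
          rw [SimpleGraph.Subgraph.top_adj]; exact h⟩
      obtain ⟨W, hW⟩ := ((HM_connected hconn hbip hV1 hV2 n).preconnected
        (u : Fin n → Fin N) (v : Fin n → Fin N)).exists_walk_length_eq_dist
      have hu : ι (u : Fin n → Fin N) = u := Subtype.ext rfl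
      have hv : ι (v : Fin n → Fin N) = v := Subtype.ext rfl
      refine ⟨⟨(W.map ι).copy hu hv⟩, ?_⟩
      calc (⊤ : (HM N G typ n).Subgraph).coe.dist u v ≤ ((W.map ι).copy hu hv).length :=
            SimpleGraph.dist_le _
        _ = W.length := by rw [SimpleGraph.Walk.length_copy, SimpleGraph.Walk.length_map]
        _ = (HM N G typ n).dist u v := hW
        _ ≤ (HM N G typ k).diam := dist_le_diam_lift hconn hbip hV1 hV2 hk _ _
        _ = (HM N G typ k).diam + 1 - 1 := by omega
    have h1 : 1 ∈ {m : ℕ | ∃ F : Finset (HM N G typ n).Subgraph, F.card = m ∧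
        (∀ B ∈ F, (HM N G typ n).IsBox ((HM N G typ k).diam + 1) B) ∧
        ∀ v : Fin n → Fin N, ∃ B ∈ F, v ∈ B.verts} := by
      refine ⟨{⊤}, Finset.card_singleton _, fun B hB => ?_, fun v => ?_⟩
      · rw [Finset.mem_singleton] at hB; rw [hB]; exact hbox
      · exact ⟨⊤, Finset.mem_singleton_self _, trivial⟩
    have h0 : 0 ∉ {m : ℕ | ∃ F : Finset (HM N G typ n).Subgraph, F.card = m ∧
        (∀ B ∈ F, (HM N G typ n).IsBox ((HM N G typ k).diam + 1) B) ∧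
        ∀ v : Fin n → Fin N, ∃ B ∈ F, v ∈ B.verts} := by
      rintro ⟨F, hF, -, hcov⟩
      rw [Finset.card_eq_zero] at hF
      obtain ⟨B, hB, -⟩ := hcov (Classical.arbitrary _)
      rw [hF] at hB
      exact absurd hB (Finset.notMem_empty B)
    have hle : coveringNumber (HM N G typ n) ((HM N G typ k).diam + 1) ≤ 1 := Nat.sInf_le h1
    have hne : coveringNumber (HM N G typ n) ((HM N G typ k).diam + 1) ≠ 0 := by
      intro h
      rcases Nat.sInf_eq_zero.mp h with h' | h'
      · exact h0 h'
      · rw [h'] at h1; exact h1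
    omega
  · -- part 2
    intro k hkn
    have hk : k ≤ n := le_of_lt hkn
    set Bp : (Fin (n - k) → Fin N) → (HM N G typ n).Subgraph := fun p =>
      (⊤ : (HM N G typ n).Subgraph).induce
        {u | ∀ i : Fin (n - k), u ⟨(i : ℕ), by have := i.isLt; omega⟩ = p i} with hBp
    have hbox : ∀ p, (HM N G typ n).IsBox ((HM N G typ k).diam + 1) (Bp p) := by
      intro p u v
      have hmem : ∀ x : Fin k → Fin N, embW N n k hk p x ∈ (Bp p).verts := by
        intro x i
        show embW N n k hk p x ⟨(i : ℕ), by have := i.isLt; omega⟩ = p i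
        have h1 : ((⟨(i : ℕ), by have := i.isLt; omega⟩ : Fin n) : ℕ) < n - k := i.isLt
        simp only [embW, dif_pos h1]
      let ι : HM N G typ k →g (Bp p).coe :=
        ⟨fun x => ⟨embW N n k hk p x, hmem x⟩, fun {a b} h => by
          exact ⟨hmem a, hmem b, SimpleGraph.Subgraph.top_adj.mpr (HM_adj_emb hk p h)⟩⟩
      have hemb : ∀ w : (Bp p).verts, embW N n k hk p (projW N k n hk (w : Fin n → Fin N))
          = (w : Fin n → Fin N) := by
        intro w
        funext i
        by_cases hi : (i : ℕ) < n - k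
        · simp only [embW, dif_pos hi]
          exact (w.2 ⟨(i : ℕ), hi⟩).symm
        · simp only [embW, projW, dif_neg hi]
          exact congrArg (w : Fin n → Fin N)
            (Fin.ext (show (i : ℕ) - (n - k) + (n - k) = (i : ℕ) by omega))
      obtain ⟨W, hW⟩ := ((HM_connected hconn hbip hV1 hV2 k).preconnected
        (projW N k n hk (u : Fin n → Fin N))
        (projW N k n hk (v : Fin n → Fin N))).exists_walk_length_eq_dist
      have hu : ι (projW N k n hk (u : Fin n → Fin N)) = u := Subtype.ext (hemb u)
      have hv : ι (projW N k n hk (v : Fin n → Fin N)) = v := Subtype.ext (hemb v)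
      refine ⟨⟨(W.map ι).copy hu hv⟩, ?_⟩
      calc (Bp p).coe.dist u v ≤ ((W.map ι).copy hu hv).length := SimpleGraph.dist_le _
        _ = W.length := by rw [SimpleGraph.Walk.length_copy, SimpleGraph.Walk.length_map]
        _ = (HM N G typ k).dist _ _ := hW
        _ ≤ (HM N G typ k).diam :=
            SimpleGraph.dist_le_diam (HM_ediam_ne_top hconn hbip hV1 hV2 k)
        _ = (HM N G typ k).diam + 1 - 1 := by omega
    set F : Finset (HM N G typ n).Subgraph := Finset.univ.image Bp with hF
    have hmemF : F.card ∈ {m : ℕ | ∃ F : Finset (HM N G typ n).Subgraph, F.card = m ∧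
        (∀ B ∈ F, (HM N G typ n).IsBox ((HM N G typ k).diam + 1) B) ∧
        ∀ v : Fin n → Fin N, ∃ B ∈ F, v ∈ B.verts} := by
      refine ⟨F, rfl, fun B hB => ?_, fun v => ?_⟩
      · rw [hF, Finset.mem_image] at hB
        obtain ⟨p, -, hp⟩ := hB
        rw [← hp]
        exact hbox p
      · refine ⟨Bp (fun i => v ⟨(i : ℕ), by have := i.isLt; omega⟩), ?_, ?_⟩
        · rw [hF, Finset.mem_image]
          exact ⟨_, Finset.mem_univ _, rfl⟩
        · intro i; rfl
    calc coveringNumber (HM N G typ n) ((HM N G typ k).diam + 1) ≤ F.card := Nat.sInf_le hmemF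
      _ ≤ (Finset.univ : Finset (Fin (n - k) → Fin N)).card := Finset.card_image_le
      _ = N ^ (n - k) := by
          rw [Finset.card_univ, Fintype.card_fun]
          simp

end Main

/-- With `ℓ_k := diam(HM_k) + 1`, we have `N_B^n(ℓ_k) = 1` for all
`k ≥ n`, and `N_B^n(ℓ_k) ≤ N^(n-k)` for all `n > k`. -/
theorem hm_boxing_upper (N : ℕ) (G : SimpleGraph (Fin N)) (typ : Fin N → Bool)
    (hconn : G.Connected)
    (hbip : ∀ x y : Fin N, G.Adj x y → typ x ≠ typ y)
    (hV1 : ∃ x, typ x = true) (hV2 : ∃ x, typ x = false)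
    (n : ℕ) :
    (∀ k : ℕ, n ≤ k →
      coveringNumber (HM N G typ n) ((HM N G typ k).diam + 1) = 1) ∧
    (∀ k : ℕ, k < n →
      coveringNumber (HM N G typ n) ((HM N G typ k).diam + 1) ≤ N ^ (n - k)) := by
  exact hm_boxing_upper' N G typ hconn hbip hV1 hV2 n
end

section
/- Let G be a connected bipartite graph on N vertices and {HM_n} the associated hierarchical graph sequence. Then the transfinite fractal dimension of {HM_n} exists and equals (log N)/2; that is, lim_{ℓ→∞} lim_{n→∞} log(N_B^n(ℓ)/N^n)/(−ℓ) = (log N)/2. -/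
open Filter Finset

section Generic
variable {V : Type*} {H : SimpleGraph V} {ℓ : ℕ}

/-- Build a walk along a chain of adjacent vertices. -/
lemma chain_walk (H : SimpleGraph V) (f : ℕ → V) (L : ℕ)
    (h : ∀ j, j < L → H.Adj (f j) (f (j+1))) :
    ∃ p : H.Walk (f 0) (f L), p.length = L := by
  induction L with
  | zero => exact ⟨SimpleGraph.Walk.nil, rfl⟩
  | succ L ih =>
    obtain ⟨p, hp⟩ := ih (fun j hj => h j (Nat.lt_succ_of_lt hj))
    exact ⟨p.append ((h L (Nat.lt_succ_self L)).toWalk),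
      by simp [SimpleGraph.Walk.length_append, hp]⟩

lemma coveringNumber_le {F : Finset H.Subgraph} (hbox : ∀ B ∈ F, H.IsBox ℓ B)
    (hcov : ∀ v : V, ∃ B ∈ F, v ∈ B.verts) : coveringNumber H ℓ ≤ F.card :=
  Nat.sInf_le ⟨F, rfl, hbox, hcov⟩

lemma singleton_isBox (v : V) : H.IsBox ℓ (H.singletonSubgraph v) := by
  rintro ⟨u, hu⟩ ⟨w, hw⟩
  simp only [SimpleGraph.singletonSubgraph_verts, Set.mem_singleton_iff] at hu hw
  subst hu; subst hw
  refine ⟨SimpleGraph.Reachable.refl _, ?_⟩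
  have h : (⟨w, hu⟩ : (H.singletonSubgraph w).verts) = ⟨w, hw⟩ := Subtype.ext rfl
  rw [h, SimpleGraph.dist_self]
  exact Nat.zero_le _

lemma covSet_nonempty [Fintype V] :
    {m : ℕ | ∃ F : Finset H.Subgraph, F.card = m ∧ (∀ B ∈ F, H.IsBox ℓ B) ∧
    ∀ v : V, ∃ B ∈ F, v ∈ B.verts}.Nonempty := by
  classical
  refine ⟨_, Finset.image (fun v => H.singletonSubgraph v) Finset.univ, rfl, ?_, ?_⟩
  · intro B hB
    obtain ⟨v, _, hv⟩ := Finset.mem_image.1 hB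
    exact hv ▸ singleton_isBox v
  · intro v
    exact ⟨H.singletonSubgraph v, Finset.mem_image_of_mem _ (Finset.mem_univ v), rfl⟩

lemma exists_min_cover [Fintype V] : ∃ F : Finset H.Subgraph, F.card = coveringNumber H ℓ ∧
    (∀ B ∈ F, H.IsBox ℓ B) ∧ ∀ v : V, ∃ B ∈ F, v ∈ B.verts :=
  Nat.sInf_mem covSet_nonempty

lemma one_le_coveringNumber [Fintype V] [Nonempty V] : 1 ≤ coveringNumber H ℓ := by
  obtain ⟨F, hcard, _, hcov⟩ := (exists_min_cover (H := H) (ℓ := ℓ))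
  obtain ⟨B, hB, _⟩ := hcov (Classical.arbitrary V)
  rw [← hcard]
  exact Finset.card_pos.2 ⟨B, hB⟩

lemma coveringNumber_le_card [Fintype V] : coveringNumber H ℓ ≤ Fintype.card V := by
  classical
  have h1 : coveringNumber H ℓ ≤
      (Finset.image (fun v => H.singletonSubgraph v) Finset.univ).card := by
    refine coveringNumber_le ?_ ?_
    · intro B hB
      obtain ⟨v, _, hv⟩ := Finset.mem_image.1 hB
      exact hv ▸ singleton_isBox v
    · intro v
      exact ⟨H.singletonSubgraph v, Finset.mem_image_of_mem _ (Finset.mem_univ v), rfl⟩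
  exact h1.trans (Finset.card_image_le.trans (le_of_eq Finset.card_univ))

end Generic
section Base
variable {N : ℕ} {G : SimpleGraph (Fin N)} {typ : Fin N → Bool}

lemma typ_walk (hbip : ∀ x y : Fin N, G.Adj x y → typ x ≠ typ y) {u v : Fin N}
    (p : G.Walk u v) : (typ u = typ v) ↔ Even p.length := by
  induction p with
  | nil => simp
  | @cons u w v h q ih =>
    have hne := hbip u w h
    simp only [SimpleGraph.Walk.length_cons, Nat.even_add_one, ← ih]
    cases hu : typ u <;> cases hw : typ w <;> cases hv : typ v <;> simp_all

lemma exists_neighbor (hconn : G.Connected) (hN : 2 ≤ N) (u : Fin N) :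
    ∃ v, G.Adj u v := by
  obtain ⟨w, hw⟩ := Fintype.exists_ne_of_one_lt_card (by simp; omega) u
  obtain ⟨p⟩ := hconn u w
  cases p with
  | nil => exact absurd rfl hw
  | cons h q => exact ⟨_, h⟩

lemma walk_add_two (hconn : G.Connected) (hN : 2 ≤ N) {u v : Fin N} {L : ℕ}
    (h : ∃ p : G.Walk u v, p.length = L) : ∃ p : G.Walk u v, p.length = L + 2 := by
  obtain ⟨p, hp⟩ := h
  obtain ⟨w, hw⟩ := exists_neighbor hconn hN u
  exact ⟨(hw.toWalk.append hw.symm.toWalk).append p, by simp [hp]⟩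

lemma exists_walk_length (hconn : G.Connected) (hN : 2 ≤ N)
    (hbip : ∀ x y : Fin N, G.Adj x y → typ x ≠ typ y) (u v : Fin N) (L : ℕ)
    (hL : G.dist u v ≤ L) (hpar : (typ u = typ v) ↔ Even L) :
    ∃ p : G.Walk u v, p.length = L := by
  obtain ⟨p, hp⟩ := hconn.exists_walk_length_eq_dist u v
  have hpar' : (typ u = typ v) ↔ Even p.length := typ_walk hbip p
  have hmod : ∃ j, L = p.length + 2 * j := by
    have h2 := hpar'.symm.trans hpar
    simp only [Nat.even_iff] at h2
    refine ⟨(L - p.length) / 2, by omega⟩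
  obtain ⟨j, hj⟩ := hmod
  subst hj
  clear hpar hpar' hL
  induction j with
  | zero => exact ⟨p, by omega⟩
  | succ j ih =>
    obtain ⟨q, hq⟩ := ih
    obtain ⟨r, hr⟩ := walk_add_two hconn hN ⟨q, hq⟩
    exact ⟨r, by omega⟩

lemma dist_le_N (hconn : G.Connected) (u v : Fin N) : G.dist u v ≤ N := by
  obtain ⟨p⟩ := hconn u v
  have := p.toPath.2.length_lt
  exact le_of_lt (lt_of_le_of_lt (SimpleGraph.dist_le _) (by simpa using this))

end Base

section HMlemmas
variable {N : ℕ} {G : SimpleGraph (Fin N)} {typ : Fin N → Bool} {n : ℕ}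

lemma HM_adj_struct {x y : Fin n → Fin N} (h : (HM N G typ n).Adj x y) :
    ∃ k : Fin n,
      (∀ i : Fin n, i < k → x i = y i) ∧
      (∃ t : Bool, (∀ i : Fin n, k ≤ i → typ (x i) = t) ∧
                   (∀ i : Fin n, k ≤ i → typ (y i) = !t)) ∧
      (∀ i : Fin n, k ≤ i → G.Adj (x i) (y i)) := by
  rw [HM, SimpleGraph.fromRel_adj] at h
  rcases h.2 with h' | h'
  · exact h'
  · obtain ⟨k, hpre, ⟨t, hyt, hxt⟩, hadj⟩ := h'
    exact ⟨k, fun i hi => (hpre i hi).symm,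
      ⟨!t, hxt, fun i hi => by simp [hyt i hi]⟩, fun i hi => (hadj i hi).symm⟩

lemma HM_adj_intro {x y : Fin n → Fin N} (hne : x ≠ y) (h : HMRel N G typ n x y) :
    (HM N G typ n).Adj x y := by
  rw [HM, SimpleGraph.fromRel_adj]
  exact ⟨hne, Or.inl h⟩

/-- The set of words whose last `M` letters have alternating types (fixed phase). -/
def AltS (typ : Fin N → Bool) (n M : ℕ) (w : Fin n → Fin N) : Prop :=
  ∀ i : Fin n, n - M ≤ (i : ℕ) → typ (w i) = decide (Even (i : ℕ))

lemma alt_step (hMn : M ≤ n) {x w w' : Fin n → Fin N} (hx : AltS typ n M x)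
    (hadj : (HM N G typ n).Adj w w') {q : ℕ} (hq1 : n - M + 2 ≤ q) (hq2 : q ≤ n)
    (hw : ∀ p : Fin n, (p : ℕ) < q → w p = x p) :
    ∀ p : Fin n, (p : ℕ) < q - 1 → w' p = x p := by
  obtain ⟨k, hpre, ⟨t, hwt, -⟩, -⟩ := HM_adj_struct hadj
  intro p hp
  by_cases hk : (p : ℕ) < (k : ℕ)
  · rw [← hpre p hk]
    exact hw p (by omega)
  · exfalso
    have hq2' : 2 ≤ q := by omega
    set a : Fin n := ⟨q - 2, by omega⟩ with ha
    set b : Fin n := ⟨q - 1, by omega⟩ with hb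
    have hka : k ≤ a := by
      rw [Fin.le_def]; simp [ha]; omega
    have hkb : k ≤ b := by
      rw [Fin.le_def]; simp [ha, hb]; omega
    have h1 : typ (w a) = t := hwt a hka
    have h2 : typ (w b) = t := hwt b hkb
    have h3 : w a = x a := hw a (by simp [ha]; omega)
    have h4 : w b = x b := hw b (by simp [hb]; omega)
    have h5 : typ (x a) = decide (Even ((a : ℕ))) := hx a (by simp [ha]; omega)
    have h6 : typ (x b) = decide (Even ((b : ℕ))) := hx b (by simp [hb]; omega)
    rw [h3, h5] at h1
    rw [h4, h6] at h2
    have : decide (Even (q - 2)) = decide (Even (q - 1)) := by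
      simp only [ha, hb] at h1 h2; rw [h1, h2]
    have heo : Even (q - 2) ↔ Even (q - 1) := by simpa using this
    rw [Nat.even_iff, Nat.even_iff] at heo
    omega

lemma alt_walk_agree (hMn : M ≤ n) {x : Fin n → Fin N} (hx : AltS typ n M x)
    (f : ℕ → Fin n → Fin N) (r : ℕ) (hf0 : f 0 = x)
    (hadj : ∀ j, j < r → (HM N G typ n).Adj (f j) (f (j + 1))) (hr : r + 1 ≤ M) :
    ∀ p : Fin n, (p : ℕ) < n - r → f r p = x p := by
  induction r with
  | zero => intro p _; rw [hf0]
  | succ r ih =>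
    have ihr := ih (fun j hj => hadj j (by omega)) (by omega)
    have := alt_step (G := G) hMn hx (hadj r (by omega)) (q := n - r)
      (by omega) (by omega) ihr
    intro p hp
    exact this p (by omega)

lemma alt_far (hMn : M ≤ n) {x y : Fin n → Fin N} (hx : AltS typ n M x)
    (hy : AltS typ n M y) (p₀ : Fin n) (hp₀ : (p₀ : ℕ) + M ≤ n) (hne : x p₀ ≠ y p₀)
    (f : ℕ → Fin n → Fin N) (r : ℕ) (hf0 : f 0 = x) (hfr : f r = y)
    (hadj : ∀ j, j < r → (HM N G typ n).Adj (f j) (f (j + 1))) (hr : r + 3 ≤ 2 * M) :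
    False := by
  have hM : 2 ≤ M := by omega
  by_cases hcase : r + 1 ≤ M
  · have := alt_walk_agree hMn hx f r hf0 hadj hcase p₀ (by omega)
    rw [hfr] at this
    exact hne (this.symm)
  · -- split at M - 1
    have h1 := alt_walk_agree hMn hx f (M - 1) hf0
      (fun j hj => hadj j (by omega)) (by omega) p₀ (by omega)
    set g : ℕ → Fin n → Fin N := fun j => f (r - j) with hg
    have hgadj : ∀ j, j < r - (M - 1) → (HM N G typ n).Adj (g j) (g (j + 1)) := by
      intro j hj
      have h' := hadj (r - (j + 1)) (by omega)
      have e1 : r - (j + 1) + 1 = r - j := by omega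
      rw [e1] at h'
      exact h'.symm
    have h2 := alt_walk_agree hMn hy g (r - (M - 1)) (by simp [hg, hfr])
      hgadj (by omega) p₀ (by omega)
    have e2 : r - (r - (M - 1)) = M - 1 := by omega
    rw [hg] at h2
    simp only [e2] at h2
    rw [h1] at h2
    exact hne h2

end HMlemmas


section Lower
variable {N : ℕ} {G : SimpleGraph (Fin N)} {typ : Fin N → Bool} {n : ℕ}

/-- A word with arbitrary prefix `c` and canonical alternating-type window. -/
def altWord (typ : Fin N → Bool) (n M : ℕ) (aT aF : Fin N)
    (c : Fin (n - M) → Fin N) : Fin n → Fin N :=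
  fun i => if h : (i : ℕ) < n - M then c ⟨i, h⟩ else if Even (i : ℕ) then aT else aF

lemma altWord_mem (haT : typ aT = true) (haF : typ aF = false)
    (M : ℕ) (c : Fin (n - M) → Fin N) : AltS typ n M (altWord typ n M aT aF c) := by
  intro i hi
  rw [altWord, dif_neg (by omega)]
  by_cases he : Even (i : ℕ) <;> simp [he, haT, haF]

lemma cov_lower (hV1 : ∃ x, typ x = true) (hV2 : ∃ x, typ x = false)
    {ℓ M : ℕ} (hM2 : 2 ≤ M) (hMn : M ≤ n) (hℓ : ℓ + 2 ≤ 2 * M) :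
    N ^ (n - M) ≤ coveringNumber (HM N G typ n) ℓ := by
  classical
  obtain ⟨aT, haT⟩ := hV1
  obtain ⟨aF, haF⟩ := hV2
  obtain ⟨F, hFcard, hFbox, hFcov⟩ :=
    exists_min_cover (H := HM N G typ n) (ℓ := ℓ)
  choose φ hφF hφmem using fun c : Fin (n - M) → Fin N => hFcov (altWord typ n M aT aF c)
  have hinj : Function.Injective φ := by
    intro c c' hcc
    by_contra hne
    obtain ⟨p, hp⟩ := Function.ne_iff.1 hne
    set x := altWord typ n M aT aF c with hx
    set y := altWord typ n M aT aF c' with hy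
    have hmem' : y ∈ (φ c).verts := hcc ▸ hφmem c'
    obtain ⟨hreach, hdist⟩ := hFbox (φ c) (hφF c) ⟨x, hφmem c⟩ ⟨y, hmem'⟩
    obtain ⟨pw, hpw⟩ := hreach.exists_walk_length_eq_dist
    set qw := pw.map (φ c).hom with hqw
    have hql : qw.length ≤ ℓ - 1 := by
      rw [hqw, SimpleGraph.Walk.length_map, hpw]; exact hdist
    refine alt_far (G := G) hMn (altWord_mem haT haF M c) (altWord_mem haT haF M c')
      ⟨(p : ℕ), by omega⟩ (by simp; omega) ?_ qw.getVert qw.length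
      (SimpleGraph.Walk.getVert_zero qw) (SimpleGraph.Walk.getVert_length qw)
      (fun j hj => SimpleGraph.Walk.adj_getVert_succ qw hj) (by omega)
    simpa [altWord, p.isLt] using hp
  calc N ^ (n - M) = Fintype.card (Fin (n - M) → Fin N) := by simp
    _ ≤ Fintype.card {B // B ∈ F} :=
      Fintype.card_le_of_injective (fun c => ⟨φ c, hφF c⟩)
        (fun c c' h => hinj (Subtype.ext_iff.1 h))
    _ = F.card := Fintype.card_coe F
    _ = _ := hFcard

end Lower

section Submult
variable {N : ℕ} {G : SimpleGraph (Fin N)} {typ : Fin N → Bool} {n : ℕ}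

lemma HMRel_cons (a : Fin N) {w w' : Fin n → Fin N} (h : HMRel N G typ n w w') :
    HMRel N G typ (n + 1) (Fin.cons a w) (Fin.cons a w') := by
  obtain ⟨k, hpre, ⟨t, hxt, hyt⟩, hadj⟩ := h
  refine ⟨k.succ, ?_, ⟨t, ?_, ?_⟩, ?_⟩
  · intro i hi
    induction i using Fin.cases with
    | zero => simp
    | succ j =>
      have : j < k := by
        rw [Fin.lt_def] at hi ⊢
        simpa using hi
      simp [hpre j this]
  · intro i hi
    induction i using Fin.cases with
    | zero => exact absurd hi (by simp [Fin.le_def])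
    | succ j =>
      have : k ≤ j := by rw [Fin.le_def] at hi ⊢; simpa using hi
      simpa using hxt j this
  · intro i hi
    induction i using Fin.cases with
    | zero => exact absurd hi (by simp [Fin.le_def])
    | succ j =>
      have : k ≤ j := by rw [Fin.le_def] at hi ⊢; simpa using hi
      simpa using hyt j this
  · intro i hi
    induction i using Fin.cases with
    | zero => exact absurd hi (by simp [Fin.le_def])
    | succ j =>
      have : k ≤ j := by rw [Fin.le_def] at hi ⊢; simpa using hi
      simpa using hadj j this

/-- Prepending a letter is a graph homomorphism `HM_n →g HM_{n+1}`. -/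
def consHom (N : ℕ) (G : SimpleGraph (Fin N)) (typ : Fin N → Bool) (n : ℕ) (a : Fin N) :
    HM N G typ n →g HM N G typ (n + 1) where
  toFun w := Fin.cons a w
  map_rel' := by
    intro w w' h
    rw [HM, SimpleGraph.fromRel_adj] at h ⊢
    refine ⟨fun hc => h.1 (funext fun j => by simpa using congrFun hc j.succ), ?_⟩
    rcases h.2 with h' | h'
    · exact Or.inl (HMRel_cons a h')
    · exact Or.inr (HMRel_cons a h')

lemma isBox_map {ℓ : ℕ} {B : (HM N G typ n).Subgraph} (hB : (HM N G typ n).IsBox ℓ B)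
    (a : Fin N) : (HM N G typ (n + 1)).IsBox ℓ (B.map (consHom N G typ n a)) := by
  set f := consHom N G typ n a with hf
  set ψ : B.coe →g (B.map f).coe :=
    { toFun := fun z => ⟨f z.1, Set.mem_image_of_mem f z.2⟩
      map_rel' := by
        intro z z' h
        exact ⟨z.1, z'.1, h, rfl, rfl⟩ } with hψ
  intro u v
  obtain ⟨u₀, hu₀, hu₁⟩ := u.2
  obtain ⟨v₀, hv₀, hv₁⟩ := v.2
  have hueq : u = ψ ⟨u₀, hu₀⟩ := Subtype.ext hu₁.symm
  have hveq : v = ψ ⟨v₀, hv₀⟩ := Subtype.ext hv₁.symm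
  obtain ⟨hreach, hdist⟩ := hB ⟨u₀, hu₀⟩ ⟨v₀, hv₀⟩
  obtain ⟨pw, hpw⟩ := hreach.exists_walk_length_eq_dist
  refine ⟨?_, ?_⟩
  · rw [hueq, hveq]
    exact hreach.map ψ
  · rw [hueq, hveq]
    calc (B.map f).coe.dist (ψ ⟨u₀, hu₀⟩) (ψ ⟨v₀, hv₀⟩) ≤ (pw.map ψ).length :=
          SimpleGraph.dist_le _
      _ = pw.length := SimpleGraph.Walk.length_map _ _
      _ ≤ ℓ - 1 := by rw [hpw]; exact hdist

lemma cov_succ (ℓ : ℕ) :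
    coveringNumber (HM N G typ (n + 1)) ℓ ≤ N * coveringNumber (HM N G typ n) ℓ := by
  classical
  obtain ⟨F, hFcard, hFbox, hFcov⟩ := exists_min_cover (H := HM N G typ n) (ℓ := ℓ)
  set F' : Finset (HM N G typ (n + 1)).Subgraph :=
    Finset.image (fun p : Fin N × (HM N G typ n).Subgraph =>
      p.2.map (consHom N G typ n p.1)) (Finset.univ ×ˢ F) with hF'
  have h1 : coveringNumber (HM N G typ (n + 1)) ℓ ≤ F'.card := by
    refine coveringNumber_le ?_ ?_
    · intro B hB
      rw [hF', Finset.mem_image] at hB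
      obtain ⟨⟨a, B₀⟩, hmem, rfl⟩ := hB
      exact isBox_map (hFbox B₀ (Finset.mem_product.1 hmem).2) a
    · intro v
      obtain ⟨B, hB, hmem⟩ := hFcov (Fin.tail v)
      refine ⟨B.map (consHom N G typ n (v 0)), ?_, ?_⟩
      · rw [hF', Finset.mem_image]
        exact ⟨(v 0, B), Finset.mem_product.2 ⟨Finset.mem_univ _, hB⟩, rfl⟩
      · rw [SimpleGraph.Subgraph.map_verts]
        exact ⟨Fin.tail v, hmem, Fin.cons_self_tail v⟩
  have h2 : F'.card ≤ N * coveringNumber (HM N G typ n) ℓ := by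
    calc F'.card ≤ (Finset.univ ×ˢ F).card := Finset.card_image_le
      _ = N * F.card := by simp [Finset.card_product]
      _ = _ := by rw [hFcard]
  exact h1.trans h2

end Submult

section Upper
variable {N : ℕ} {G : SimpleGraph (Fin N)} {typ : Fin N → Bool} {n : ℕ}

def blockSet (N n m' : ℕ) (p : Fin (n - m') → Fin N) : Set (Fin n → Fin N) :=
  {w | ∀ i : Fin n, ∀ h : (i : ℕ) < n - m', w i = p ⟨i, h⟩}

def blockSub (N : ℕ) (G : SimpleGraph (Fin N)) (typ : Fin N → Bool) (n m' : ℕ)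
    (p : Fin (n - m') → Fin N) : (HM N G typ n).Subgraph :=
  (⊤ : (HM N G typ n).Subgraph).induce (blockSet N n m' p)

lemma blockSub_verts (m' : ℕ) (p : Fin (n - m') → Fin N) :
    (blockSub N G typ n m' p).verts = blockSet N n m' p := rfl

lemma block_coe_adj {m' : ℕ} {p : Fin (n - m') → Fin N} {u v : Fin n → Fin N}
    (hu : u ∈ blockSet N n m' p) (hv : v ∈ blockSet N n m' p)
    (h : (HM N G typ n).Adj u v) :
    (blockSub N G typ n m' p).coe.Adj ⟨u, hu⟩ ⟨v, hv⟩ := by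
  rw [SimpleGraph.Subgraph.coe_adj]
  exact ⟨hu, hv, h⟩

lemma bool_ne (a b : Bool) (h : a ≠ b) : a = !b := by
  cases a <;> cases b <;> simp_all

/-- Monochromatize the suffix inside a block. -/
lemma to_mono (hconn : G.Connected) (hN : 2 ≤ N)
    (hbip : ∀ x y : Fin N, G.Adj x y → typ x ≠ typ y)
    {m' : ℕ} (hm1 : 1 ≤ m') (hmn : m' ≤ n) (p : Fin (n - m') → Fin N)
    (w : Fin n → Fin N) (hw : w ∈ blockSet N n m' p) :
    ∃ (w' : Fin n → Fin N) (hw' : w' ∈ blockSet N n m' p) (t : Bool),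
      (∀ i : Fin n, n - m' ≤ (i : ℕ) → typ (w' i) = t) ∧
      ∃ pw : (blockSub N G typ n m' p).coe.Walk ⟨w, hw⟩ ⟨w', hw'⟩,
        pw.length ≤ m' - 1 := by
  classical
  have hn1 : 1 ≤ n := hm1.trans hmn
  choose nb hnb using exists_neighbor hconn hN
  -- μ w : least k ≥ n - m' such that typ is constant on [k, n)
  set last : Fin n := ⟨n - 1, by omega⟩ with hlast
  have hlastc : (last : ℕ) = n - 1 := rfl
  set Pg : (Fin n → Fin N) → ℕ → Prop := fun w k =>
    n - m' ≤ k ∧ ∀ i : Fin n, k ≤ (i : ℕ) → typ (w i) = typ (w last) with hPg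
  have hPne : ∀ w, Pg w (n - 1) := by
    intro w
    refine ⟨by omega, fun i hi => ?_⟩
    have : i = last := Fin.ext (by omega)
    rw [this]
  -- strong induction on μ w - (n - m')
  suffices h : ∀ d (w : Fin n → Fin N) (hw : w ∈ blockSet N n m' p),
      sInf {k | Pg w k} - (n - m') ≤ d →
      ∃ (w' : Fin n → Fin N) (hw' : w' ∈ blockSet N n m' p) (t : Bool),
      (∀ i : Fin n, n - m' ≤ (i : ℕ) → typ (w' i) = t) ∧
      ∃ pw : (blockSub N G typ n m' p).coe.Walk ⟨w, hw⟩ ⟨w', hw'⟩,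
        pw.length ≤ d by
    refine (h (m' - 1) w hw ?_).imp ?_
    · have : sInf {k | Pg w k} ≤ n - 1 := Nat.sInf_le (hPne w)
      omega
    · tauto
  intro d
  induction d with
  | zero =>
    intro w hw hd
    have hmem : sInf {k | Pg w k} ∈ {k | Pg w k} := Nat.sInf_mem ⟨n - 1, hPne w⟩
    have hle : n - m' ≤ sInf {k | Pg w k} := hmem.1
    have hinf : sInf {k | Pg w k} = n - m' := by omega
    refine ⟨w, hw, typ (w last), ?_, SimpleGraph.Walk.nil, by simp⟩
    intro i hi
    exact hmem.2 i (by omega)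
  | succ d ih =>
    intro w hw hd
    have hmem : sInf {k | Pg w k} ∈ {k | Pg w k} := Nat.sInf_mem ⟨n - 1, hPne w⟩
    set μ := sInf {k | Pg w k} with hμ
    by_cases hcase : μ = n - m'
    · -- already monochromatic
      refine ⟨w, hw, typ (w last), ?_, SimpleGraph.Walk.nil, by simp⟩
      intro i hi
      exact hmem.2 i (by omega)
    · have hμlt : n - m' < μ := by
        have := hmem.1; omega
      have hμle : μ ≤ n - 1 := Nat.sInf_le (hPne w)
      set t := typ (w last) with ht
      -- the next word
      set w₁ : Fin n → Fin N := fun i => if μ ≤ (i : ℕ) then nb (w i) else w i with hw₁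
      have hw₁mem : w₁ ∈ blockSet N n m' p := by
        intro i hi
        simp only [hw₁]
        rw [if_neg (by omega)]
        exact hw i hi
      have hadj : (HM N G typ n).Adj w w₁ := by
        refine HM_adj_intro ?_ ⟨⟨μ, by omega⟩, ?_, ⟨t, ?_, ?_⟩, ?_⟩
        · intro he
          have h0 := congrFun he last
          simp only [hw₁] at h0
          rw [if_pos (by omega)] at h0
          exact hbip _ _ (hnb (w last)) (congrArg typ h0)
        · intro i hi
          rw [Fin.lt_def] at hi
          simp only at hi
          simp only [hw₁]
          rw [if_neg (by omega)]
        · intro i hi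
          rw [Fin.le_def] at hi
          exact hmem.2 i (by simpa using hi)
        · intro i hi
          rw [Fin.le_def] at hi
          simp only at hi
          simp only [hw₁]
          rw [if_pos (by omega)]
          refine bool_ne _ _ ?_
          have := hbip _ _ (hnb (w i))
          rw [hmem.2 i (by omega)] at this
          exact fun hc => this (by rw [hc])
        · intro i hi
          rw [Fin.le_def] at hi
          simp only at hi
          simp only [hw₁]
          rw [if_pos (by omega)]
          exact hnb (w i)
      -- μ decreases
      have hstep : sInf {k | Pg w₁ k} ≤ μ - 1 := by
        refine Nat.sInf_le ⟨by omega, ?_⟩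
        have hlastval : w₁ last = nb (w last) := by
          simp only [hw₁]; rw [if_pos (by omega)]
        have hnt : typ (w₁ last) = !t := by
          rw [hlastval]
          exact bool_ne _ _ (fun hc => hbip _ _ (hnb (w last)) (by rw [hc]))
        intro i hi
        rw [hnt]
        by_cases hiμ : μ ≤ (i : ℕ)
        · simp only [hw₁]; rw [if_pos hiμ]
          exact bool_ne _ _ (fun hc => hbip _ _ (hnb (w i)) ((hmem.2 i hiμ).trans hc.symm))
        · -- i = μ - 1
          have hieq : (i : ℕ) = μ - 1 := by omega
          simp only [hw₁]; rw [if_neg (by omega)]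
          -- typ (w i) ≠ t by minimality of μ
          have hnotP : ¬ Pg w (μ - 1) := by
            intro hP
            have := Nat.sInf_le (show μ - 1 ∈ {k | Pg w k} from hP)
            omega
          have hex : ∃ i' : Fin n, μ - 1 ≤ (i' : ℕ) ∧ typ (w i') ≠ typ (w last) := by
            by_contra hcon
            push_neg at hcon
            exact hnotP ⟨by omega, fun i' hi' => hcon i' hi'⟩
          obtain ⟨i', hi', hti'⟩ := hex
          have : (i' : ℕ) = μ - 1 := by
            by_contra hne'
            exact hti' (hmem.2 i' (by omega))
          have hii' : i = i' := Fin.ext (by omega)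
          rw [hii']
          exact bool_ne _ _ hti'
      obtain ⟨w', hw', t', hmono, pw, hpw⟩ := ih w₁ hw₁mem (by omega)
      refine ⟨w', hw', t', hmono,
        SimpleGraph.Walk.cons (block_coe_adj hw hw₁mem hadj) pw, ?_⟩
      rw [SimpleGraph.Walk.length_cons]
      omega

end Upper

section Upper2
variable {N : ℕ} {G : SimpleGraph (Fin N)} {typ : Fin N → Bool} {n : ℕ}

lemma ite_parity (tu : Bool) (j : ℕ) :
    (if Even j then tu else !tu) = !(if Even (j + 1) then tu else !tu) := by
  rcases Nat.even_or_odd j with hpar | hpar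
  · simp [Nat.even_add_one, hpar]
  · simp [Nat.even_add_one, Nat.not_even_iff_odd.2 hpar]

lemma ite_parity' (tu : Bool) (j : ℕ) :
    (if Even (j + 1) then tu else !tu) = !(if Even j then tu else !tu) := by
  rcases Nat.even_or_odd j with hpar | hpar
  · simp [Nat.even_add_one, hpar]
  · simp [Nat.even_add_one, Nat.not_even_iff_odd.2 hpar]

lemma typ_getVert (hbip : ∀ x y : Fin N, G.Adj x y → typ x ≠ typ y) {a b : Fin N}
    (pg : G.Walk a b) : ∀ j, j ≤ pg.length →
    typ (pg.getVert j) = if Even j then typ a else !typ a := by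
  intro j
  induction j with
  | zero => intro _; simp
  | succ j ih =>
    intro hj
    have hadj := pg.adj_getVert_succ (show j < pg.length by omega)
    have hne := hbip _ _ hadj
    have hprev := ih (by omega)
    rw [bool_ne _ _ (fun hc => hne hc.symm), hprev]
    rcases Nat.even_or_odd j with he | ho
    · rw [if_pos he, if_neg (by simp [Nat.even_add_one, he])]
    · rw [if_neg (by simp [Nat.not_even_iff_odd.2 ho]),
        if_pos (by simp [Nat.even_add_one, Nat.not_even_iff_odd.2 ho]), Bool.not_not]

lemma mono_to_mono (hconn : G.Connected) (hN : 2 ≤ N)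
    (hbip : ∀ x y : Fin N, G.Adj x y → typ x ≠ typ y)
    {m' : ℕ} (hm1 : 1 ≤ m') (hmn : m' ≤ n) (p : Fin (n - m') → Fin N)
    {u v : Fin n → Fin N} (hu : u ∈ blockSet N n m' p) (hv : v ∈ blockSet N n m' p)
    {tu tv : Bool} (hmu : ∀ i : Fin n, n - m' ≤ (i : ℕ) → typ (u i) = tu)
    (hmv : ∀ i : Fin n, n - m' ≤ (i : ℕ) → typ (v i) = tv) :
    ∃ pw : (blockSub N G typ n m' p).coe.Walk ⟨u, hu⟩ ⟨v, hv⟩, pw.length ≤ 2 * N + 1 := by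
  classical
  have hn1 : 1 ≤ n := hm1.trans hmn
  set L : ℕ := 2 * N + (if tu = tv then 0 else 1) with hL
  have hwalks : ∀ i : {i : Fin n // n - m' ≤ (i : ℕ)},
      ∃ pg : G.Walk (u i.1) (v i.1), pg.length = L := by
    rintro ⟨i, hi⟩
    refine exists_walk_length hconn hN hbip _ _ L ((dist_le_N hconn _ _).trans (by omega)) ?_
    rw [hmu i hi, hmv i hi, hL]
    rcases eq_or_ne tu tv with he | he
    · simp [he, Nat.even_add, Nat.even_mul]
    · simp [he, Nat.even_add, Nat.even_mul]
  choose P hP using hwalks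
  set g : ℕ → Fin n → Fin N :=
    fun j i => if h : n - m' ≤ (i : ℕ) then (P ⟨i, h⟩).getVert j else u i with hg
  have hg0 : g 0 = u := by
    funext i
    simp only [hg]
    split <;> simp
  have hgL : g L = v := by
    funext i
    simp only [hg]
    split
    · rename_i h
      rw [← hP ⟨i, h⟩, SimpleGraph.Walk.getVert_length]
    · rename_i h
      rw [hu i (by omega), hv i (by omega)]
  have hmem : ∀ j, g j ∈ blockSet N n m' p := by
    intro j i hi
    simp only [hg]
    rw [dif_neg (by omega)]
    exact hu i hi
  have htyp : ∀ j, j ≤ L → ∀ i : Fin n, ∀ h : n - m' ≤ (i : ℕ),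
      typ (g j i) = if Even j then tu else !tu := by
    intro j hj i h
    simp only [hg]
    rw [dif_pos h, typ_getVert hbip _ j (by rw [hP ⟨i, h⟩]; exact hj), hmu i h]
  have hadj : ∀ j, j < L → (HM N G typ n).Adj (g j) (g (j + 1)) := by
    intro j hj
    set last : Fin n := ⟨n - 1, by omega⟩ with hlast
    have hlastc : (last : ℕ) = n - 1 := rfl
    have ht1 := htyp j (by omega) last (by omega)
    have ht2 := htyp (j + 1) (by omega) last (by omega)
    refine HM_adj_intro ?_ ⟨⟨n - m', by omega⟩, ?_, ⟨if Even j then tu else !tu, ?_, ?_⟩, ?_⟩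
    · intro he
      have hx := ht1.symm.trans ((congrArg typ (congrFun he last)).trans ht2)
      rw [ite_parity tu j] at hx
      simp at hx
    · intro i hi
      rw [Fin.lt_def] at hi
      have hi' : (i : ℕ) < n - m' := by simpa using hi
      simp only [hg]
      rw [dif_neg (by omega), dif_neg (by omega)]
    · intro i hi
      rw [Fin.le_def] at hi
      exact htyp j (by omega) i (by simpa using hi)
    · intro i hi
      rw [Fin.le_def] at hi
      rw [htyp (j + 1) (by omega) i (by simpa using hi)]
      exact ite_parity' tu j
    · intro i hi
      rw [Fin.le_def] at hi
      simp only [hg]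
      rw [dif_pos (by simpa using hi), dif_pos (by simpa using hi)]
      exact (P _).adj_getVert_succ (show j < (P _).length by rw [hP]; exact hj)
  obtain ⟨pw0, hpw0⟩ := chain_walk (blockSub N G typ n m' p).coe
    (fun j => ⟨g j, hmem j⟩) L
    (fun j hj => block_coe_adj (hmem j) (hmem (j + 1)) (hadj j hj))
  refine ⟨pw0.copy (Subtype.ext hg0) (Subtype.ext hgL), ?_⟩
  rw [SimpleGraph.Walk.length_copy, hpw0, hL]
  split <;> omega

lemma block_isBox (hconn : G.Connected) (hN : 2 ≤ N)
    (hbip : ∀ x y : Fin N, G.Adj x y → typ x ≠ typ y)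
    {m' ℓ : ℕ} (hm1 : 1 ≤ m') (hmn : m' ≤ n) (hℓ : 2 * m' + 2 * N ≤ ℓ)
    (p : Fin (n - m') → Fin N) :
    (HM N G typ n).IsBox ℓ (blockSub N G typ n m' p) := by
  intro u v
  obtain ⟨u', hu', tu, hmu, pw1, h1⟩ := to_mono hconn hN hbip hm1 hmn p u.1 u.2
  obtain ⟨v', hv', tv, hmv, pw2, h2⟩ := to_mono hconn hN hbip hm1 hmn p v.1 v.2
  obtain ⟨pm, hm⟩ := mono_to_mono hconn hN hbip hm1 hmn p hu' hv' hmu hmv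
  set total := (pw1.append pm).append pw2.reverse with htotal
  have hlen : total.length ≤ ℓ - 1 := by
    rw [htotal]
    simp only [SimpleGraph.Walk.length_append, SimpleGraph.Walk.length_reverse]
    omega
  constructor
  · exact ⟨total⟩
  · exact (SimpleGraph.dist_le total).trans hlen

lemma cov_upper (hconn : G.Connected) (hN : 2 ≤ N)
    (hbip : ∀ x y : Fin N, G.Adj x y → typ x ≠ typ y)
    {m' ℓ : ℕ} (hm1 : 1 ≤ m') (hmn : m' ≤ n) (hℓ : 2 * m' + 2 * N ≤ ℓ) :
    coveringNumber (HM N G typ n) ℓ ≤ N ^ (n - m') := by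
  classical
  have h1 : coveringNumber (HM N G typ n) ℓ ≤
      (Finset.image (fun p => blockSub N G typ n m' p) Finset.univ).card := by
    refine coveringNumber_le ?_ ?_
    · intro B hB
      obtain ⟨p, _, rfl⟩ := Finset.mem_image.1 hB
      exact block_isBox hconn hN hbip hm1 hmn hℓ p
    · intro w
      refine ⟨blockSub N G typ n m' (fun j => w ⟨j, by omega⟩),
        Finset.mem_image_of_mem _ (Finset.mem_univ _), ?_⟩
      intro i hi
      rfl
  refine h1.trans (Finset.card_image_le.trans ?_)
  simp

end Upper2


/-- The transfinite fractal dimension of the hierarchical graph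
sequence `{HM_n}` exists (as an iterated limit, first `n → ∞`, then `ℓ → ∞`) and
equals `(log N)/2`.  Here `|HM_n| = N^n`. -/
theorem hm_transfinite_dimension (N : ℕ) (G : SimpleGraph (Fin N)) (typ : Fin N → Bool)
    (hconn : G.Connected)
    (hbip : ∀ x y : Fin N, G.Adj x y → typ x ≠ typ y)
    (hV1 : ∃ x, typ x = true) (hV2 : ∃ x, typ x = false) :
    ∃ L : ℕ → ℝ,
      (∀ ℓ : ℕ, Tendsto (fun n : ℕ =>
          Real.log ((coveringNumber (HM N G typ n) ℓ : ℝ) / (N : ℝ) ^ n) / (-(ℓ : ℝ)))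
        atTop (nhds (L ℓ))) ∧
      Tendsto L atTop (nhds (Real.log N / 2)) := by
  classical
  have hN : 2 ≤ N := by
    obtain ⟨x, hx⟩ := hV1
    obtain ⟨y, hy⟩ := hV2
    have hne : x ≠ y := fun h => by rw [h, hy] at hx; exact Bool.noConfusion hx
    have := Fintype.one_lt_card_iff_nontrivial.2 ⟨x, y, hne⟩
    simp at this; omega
  have hNpos : (0 : ℝ) < N := by positivity
  have hNR : (1 : ℝ) < N := by exact_mod_cast hN
  have h1N : (1 : ℝ) ≤ N := hNR.le
  have hlogN : 0 < Real.log N := Real.log_pos hNR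
  set a : ℕ → ℕ → ℝ :=
    fun ℓ n => (coveringNumber (HM N G typ n) ℓ : ℝ) / (N : ℝ) ^ n with ha
  have hnonempty : ∀ n : ℕ, Nonempty (Fin n → Fin N) :=
    fun n => ⟨fun _ => ⟨0, by omega⟩⟩
  have hcovpos : ∀ ℓ n, 1 ≤ coveringNumber (HM N G typ n) ℓ := by
    intro ℓ n
    have := hnonempty n
    exact one_le_coveringNumber
  have hapos : ∀ ℓ n, 0 < a ℓ n := by
    intro ℓ n
    rw [ha]
    have h1 : (0:ℝ) < (coveringNumber (HM N G typ n) ℓ : ℝ) := by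
      exact_mod_cast hcovpos ℓ n
    positivity
  have hanti : ∀ ℓ, Antitone (fun n => a ℓ n) := by
    intro ℓ
    refine antitone_nat_of_succ_le ?_
    intro n
    rw [ha]
    simp only
    rw [div_le_div_iff₀ (by positivity) (by positivity)]
    have hc := cov_succ (N := N) (G := G) (typ := typ) (n := n) ℓ
    have hcR : (coveringNumber (HM N G typ (n+1)) ℓ : ℝ) ≤
        (N : ℝ) * (coveringNumber (HM N G typ n) ℓ : ℝ) := by exact_mod_cast hc
    calc (coveringNumber (HM N G typ (n+1)) ℓ : ℝ) * (N : ℝ) ^ n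
        ≤ ((N : ℝ) * (coveringNumber (HM N G typ n) ℓ : ℝ)) * (N : ℝ) ^ n :=
          mul_le_mul_of_nonneg_right hcR (by positivity)
      _ = (coveringNumber (HM N G typ n) ℓ : ℝ) * (N : ℝ) ^ (n + 1) := by ring
  set M : ℕ → ℕ := fun ℓ => (ℓ + 4) / 2 with hM
  have hM2 : ∀ ℓ, 2 ≤ M ℓ := by intro ℓ; simp only [hM]; omega
  have hMge : ∀ ℓ, ℓ + 2 ≤ 2 * M ℓ := by intro ℓ; simp only [hM]; omega
  have hMle : ∀ ℓ, 2 * M ℓ ≤ ℓ + 4 := by intro ℓ; simp only [hM]; omega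
  have halow : ∀ ℓ n, ((N : ℝ) ^ (M ℓ))⁻¹ ≤ a ℓ n := by
    intro ℓ n
    by_cases hn : M ℓ ≤ n
    · have hc := cov_lower (G := G) (n := n) hV1 hV2 (hM2 ℓ) hn (hMge ℓ)
      have hcR : ((N : ℝ) ^ (n - M ℓ)) ≤ (coveringNumber (HM N G typ n) ℓ : ℝ) := by
        exact_mod_cast hc
      have hpow : (N : ℝ) ^ (n - M ℓ) * (N : ℝ) ^ (M ℓ) = (N : ℝ) ^ n := by
        rw [← pow_add]; congr 1; omega
      have he : ((N : ℝ) ^ (M ℓ))⁻¹ = (N : ℝ) ^ (n - M ℓ) / (N : ℝ) ^ n := by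
        rw [eq_div_iff (ne_of_gt (by positivity : (0:ℝ) < (N:ℝ) ^ n)), ← hpow]
        rw [mul_comm ((N : ℝ) ^ (n - M ℓ)) ((N : ℝ) ^ (M ℓ)), inv_mul_cancel_left₀
          (ne_of_gt (by positivity : (0:ℝ) < (N:ℝ) ^ (M ℓ)))]
      rw [he, ha]
      exact div_le_div₀ (by positivity) hcR (by positivity) le_rfl
    · have h1 : (1 : ℝ) ≤ (coveringNumber (HM N G typ n) ℓ : ℝ) := by
        exact_mod_cast hcovpos ℓ n
      rw [ha]
      simp only
      rw [inv_eq_one_div]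
      exact div_le_div₀ (by positivity) h1 (by positivity)
        (pow_le_pow_right₀ h1N (by omega))
  set A : ℕ → ℝ := fun ℓ => ⨅ n, a ℓ n with hA
  have hbdd : ∀ ℓ, BddBelow (Set.range (a ℓ)) := by
    intro ℓ
    refine ⟨0, ?_⟩
    rintro x ⟨n, rfl⟩
    exact (hapos ℓ n).le
  have htendA : ∀ ℓ, Tendsto (a ℓ) atTop (nhds (A ℓ)) :=
    fun ℓ => tendsto_atTop_ciInf (hanti ℓ) (hbdd ℓ)
  have hAlb : ∀ ℓ, ((N : ℝ) ^ (M ℓ))⁻¹ ≤ A ℓ :=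
    fun ℓ => le_ciInf (halow ℓ)
  have hApos : ∀ ℓ, 0 < A ℓ :=
    fun ℓ => lt_of_lt_of_le (by positivity) (hAlb ℓ)
  -- upper bound for A
  set m' : ℕ → ℕ := fun ℓ => (ℓ - (2 * N + 2)) / 2 with hm'
  have hAub : ∀ ℓ, A ℓ ≤ ((N : ℝ) ^ (m' ℓ))⁻¹ := by
    intro ℓ
    have hAle : A ℓ ≤ a ℓ (m' ℓ) := ciInf_le (hbdd ℓ) (m' ℓ)
    refine hAle.trans ?_
    by_cases h0 : m' ℓ = 0
    · rw [h0]
      have hcard := coveringNumber_le_card (H := HM N G typ 0) (ℓ := ℓ)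
      have hcard1 : coveringNumber (HM N G typ 0) ℓ ≤ 1 := by simpa using hcard
      have hcR : (coveringNumber (HM N G typ 0) ℓ : ℝ) ≤ 1 := by exact_mod_cast hcard1
      rw [ha]
      simp only [pow_zero, inv_one, div_one]
      exact hcR
    · have hm1 : 1 ≤ m' ℓ := by omega
      have hℓbig : 2 * m' ℓ + 2 * N ≤ ℓ := by
        simp only [hm'] at hm1 ⊢
        omega
      have hc := cov_upper (G := G) (typ := typ) (n := m' ℓ) hconn hN hbip hm1 le_rfl hℓbig
      have hc0 : coveringNumber (HM N G typ (m' ℓ)) ℓ ≤ 1 := by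
        simpa using hc
      have hcR : (coveringNumber (HM N G typ (m' ℓ)) ℓ : ℝ) ≤ 1 := by exact_mod_cast hc0
      rw [ha]
      simp only
      rw [inv_eq_one_div]
      exact div_le_div₀ (by positivity) hcR (by positivity) le_rfl
  -- the limit function
  refine ⟨fun ℓ => Real.log (A ℓ) / (-(ℓ : ℝ)), ?_, ?_⟩
  · intro ℓ
    exact ((htendA ℓ).log (ne_of_gt (hApos ℓ))).div_const _
  · -- outer limit
    set K : ℝ := (2 * (N : ℝ) + 4) * Real.log N with hK
    have hKpos : 0 < K := by
      rw [hK]; positivity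
    have hlogub : ∀ ℓ, Real.log (A ℓ) ≤ -((m' ℓ : ℝ) * Real.log N) := by
      intro ℓ
      calc Real.log (A ℓ) ≤ Real.log (((N : ℝ) ^ (m' ℓ))⁻¹) :=
            Real.log_le_log (hApos ℓ) (hAub ℓ)
        _ = -((m' ℓ : ℝ) * Real.log N) := by
            rw [Real.log_inv, Real.log_pow]
    have hloglb : ∀ ℓ, -((M ℓ : ℝ) * Real.log N) ≤ Real.log (A ℓ) := by
      intro ℓ
      calc -((M ℓ : ℝ) * Real.log N) = Real.log (((N : ℝ) ^ (M ℓ))⁻¹) := by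
            rw [Real.log_inv, Real.log_pow]
        _ ≤ Real.log (A ℓ) := Real.log_le_log (by positivity) (hAlb ℓ)
    have hKbig1 : (2 * (N:ℝ) + 3) * (Real.log N / 2) ≤ K := by
      rw [hK]; nlinarith [hlogN.le]
    have hKbig2 : 2 * Real.log N ≤ K := by
      rw [hK]; nlinarith [hlogN.le]
    have hsq1 : ∀ᶠ ℓ : ℕ in atTop,
        Real.log N / 2 - K / (ℓ : ℝ) ≤ Real.log (A ℓ) / (-(ℓ : ℝ)) := by
      filter_upwards [eventually_ge_atTop (2 * N + 4)] with ℓ hℓ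
      have hℓpos : (0 : ℝ) < (ℓ : ℝ) := by
        have : 0 < ℓ := by omega
        exact_mod_cast this
      have hL : Real.log (A ℓ) / (-(ℓ : ℝ)) = (-(Real.log (A ℓ))) / (ℓ : ℝ) := by
        rw [div_neg, neg_div]
      rw [hL, le_div_iff₀ hℓpos]
      have hcast : ((ℓ : ℝ) - (2 * N + 3)) ≤ (2 * (m' ℓ) : ℝ) := by
        have hnat : ℓ ≤ 2 * m' ℓ + 2 * N + 3 := by simp only [hm']; omega
        have := (Nat.cast_le (α := ℝ)).2 hnat
        push_cast at this
        linarith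
      have hmul := mul_le_mul_of_nonneg_right hcast
        (le_of_lt (by positivity : (0:ℝ) < Real.log N / 2))
      have h1 : (m' ℓ : ℝ) * Real.log N ≤ -Real.log (A ℓ) := by
        have := hlogub ℓ
        linarith
      have h2 : (Real.log N / 2 - K / (ℓ : ℝ)) * (ℓ : ℝ)
          = Real.log N / 2 * (ℓ : ℝ) - K := by
        field_simp
      rw [h2]
      nlinarith [hmul, h1, hKbig1]
    have hsq2 : ∀ᶠ ℓ : ℕ in atTop,
        Real.log (A ℓ) / (-(ℓ : ℝ)) ≤ Real.log N / 2 + K / (ℓ : ℝ) := by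
      filter_upwards [eventually_ge_atTop (2 * N + 4)] with ℓ hℓ
      have hℓpos : (0 : ℝ) < (ℓ : ℝ) := by
        have : 0 < ℓ := by omega
        exact_mod_cast this
      have hL : Real.log (A ℓ) / (-(ℓ : ℝ)) = (-(Real.log (A ℓ))) / (ℓ : ℝ) := by
        rw [div_neg, neg_div]
      rw [hL, div_le_iff₀ hℓpos]
      have hcast : (2 * (M ℓ) : ℝ) ≤ (ℓ : ℝ) + 4 := by
        have hnat := hMle ℓ
        have := (Nat.cast_le (α := ℝ)).2 hnat
        push_cast at this
        linarith
      have hmul := mul_le_mul_of_nonneg_right hcast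
        (le_of_lt (by positivity : (0:ℝ) < Real.log N / 2))
      have h1 : -Real.log (A ℓ) ≤ (M ℓ : ℝ) * Real.log N := by
        have := hloglb ℓ
        linarith
      have h2 : (Real.log N / 2 + K / (ℓ : ℝ)) * (ℓ : ℝ)
          = Real.log N / 2 * (ℓ : ℝ) + K := by
        field_simp
      rw [h2]
      nlinarith [hmul, h1, hKbig2]
    have h0 : Tendsto (fun ℓ : ℕ => K / (ℓ : ℝ)) atTop (nhds 0) := by
      simpa [div_eq_mul_inv] using tendsto_one_div_atTop_nhds_zero_nat.const_mul K
    have hlo : Tendsto (fun ℓ : ℕ => Real.log N / 2 - K / (ℓ : ℝ)) atTop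
        (nhds (Real.log N / 2)) := by
      simpa using tendsto_const_nhds.sub h0
    have hhi : Tendsto (fun ℓ : ℕ => Real.log N / 2 + K / (ℓ : ℝ)) atTop
        (nhds (Real.log N / 2)) := by
      simpa using tendsto_const_nhds.add h0
    exact tendsto_of_tendsto_of_tendsto_of_le_of_le' hlo hhi hsq1 hsq2
end

section
/- In the Song–Havlin–Makse model with parameter p = 1, the diameter satisfies diam(SHM¹_{n+1}) = diam(SHM¹_n) + 2 for every n, hence diam(SHM¹_n) = diam(SHM_0) + 2n; in particular diam(SHM¹_n) = Θ(n). -/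
open Filter Finset

/-- One growth step of the Song–Havlin–Makse model with `p = 1` (Mode I only):
every old edge is kept and every old vertex `v` receives `m · deg(v)` new pendant
(leaf) neighbours. -/
def shmStep {V : Type} (m : ℕ) (G : SimpleGraph V) :
    SimpleGraph (V ⊕ (Σ v : V, Fin (m * (G.neighborSet v).ncard))) :=
  SimpleGraph.fromRel (fun a b =>
    match a, b with
    | Sum.inl u, Sum.inl v => G.Adj u v
    | Sum.inl u, Sum.inr w => u = w.1
    | _, _ => False)

/-- The Song–Havlin–Makse graph sequence with `p = 1` (Mode I only), started from the
graph `G0`: `(SHM m V0 G0 n).2` is the graph at time `n`, on vertex type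
`(SHM m V0 G0 n).1`. -/
def SHM (m : ℕ) (V0 : Type) (G0 : SimpleGraph V0) : (n : ℕ) → Σ V : Type, SimpleGraph V
  | 0 => ⟨V0, G0⟩
  | n + 1 => ⟨_, shmStep m (SHM m V0 G0 n).2⟩

namespace ShmAux

open SimpleGraph

variable {V : Type} {m : ℕ} {G : SimpleGraph V}

/-- Retraction to the old vertex set. -/
def f (m : ℕ) (G : SimpleGraph V) :
    (V ⊕ (Σ v : V, Fin (m * (G.neighborSet v).ncard))) → V := Sum.elim id Sigma.fst

lemma adj_inl_inl {u v : V} :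
    (shmStep m G).Adj (Sum.inl u) (Sum.inl v) ↔ G.Adj u v := by
  rw [shmStep, SimpleGraph.fromRel_adj]
  constructor
  · rintro ⟨hne, h | h⟩
    · exact h
    · exact h.symm
  · intro h
    exact ⟨by simpa using h.ne, Or.inl h⟩

lemma adj_inr_right {w : Σ v : V, Fin (m * (G.neighborSet v).ncard)}
    {a : V ⊕ (Σ v : V, Fin (m * (G.neighborSet v).ncard))} :
    (shmStep m G).Adj a (Sum.inr w) ↔ a = Sum.inl w.1 := by
  rw [shmStep, SimpleGraph.fromRel_adj]
  cases a with
  | inl u =>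
    constructor
    · rintro ⟨hne, h | h⟩
      · exact congrArg Sum.inl h
      · exact absurd h not_false
    · rintro h
      exact ⟨by simp_all, Or.inl (by injection h)⟩
  | inr w' =>
    constructor
    · rintro ⟨hne, h | h⟩ <;> exact absurd h not_false
    · rintro ⟨⟩

lemma adj_inr_left {w : Σ v : V, Fin (m * (G.neighborSet v).ncard)}
    {a : V ⊕ (Σ v : V, Fin (m * (G.neighborSet v).ncard))} :
    (shmStep m G).Adj (Sum.inr w) a ↔ a = Sum.inl w.1 := by
  rw [SimpleGraph.adj_comm]; exact adj_inr_right

lemma adj_f {a b : V ⊕ (Σ v : V, Fin (m * (G.neighborSet v).ncard))}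
    (h : (shmStep m G).Adj a b) : f m G a = f m G b ∨ G.Adj (f m G a) (f m G b) := by
  cases a with
  | inl u =>
    cases b with
    | inl v => exact Or.inr (adj_inl_inl.mp h)
    | inr w => exact Or.inl (Sum.inl.inj (adj_inr_right.mp h))
  | inr w =>
    cases b with
    | inl v => exact Or.inl (Sum.inl.inj (adj_inr_left.mp h)).symm
    | inr w' => exact absurd (adj_inr_right.mp h) (by simp)

lemma edist_proj {a b : V ⊕ (Σ v : V, Fin (m * (G.neighborSet v).ncard))}
    (p : (shmStep m G).Walk a b) : G.edist (f m G a) (f m G b) ≤ p.length := by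
  induction p with
  | nil => simp [edist_self]
  | @cons a b c h q ih =>
    have htri : G.edist (f m G a) (f m G c) ≤
        G.edist (f m G a) (f m G b) + G.edist (f m G b) (f m G c) :=
      SimpleGraph.edist_triangle
    rcases adj_f h with he | ha
    · rw [he]
      calc G.edist (f m G b) (f m G c) ≤ (q.length : ℕ∞) := ih
        _ ≤ ((q.length + 1 : ℕ) : ℕ∞) := by
            push_cast; exact le_self_add
        _ = _ := by simp [SimpleGraph.Walk.length_cons]
    · calc G.edist (f m G a) (f m G c)
          ≤ G.edist (f m G a) (f m G b) + G.edist (f m G b) (f m G c) := htri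
        _ ≤ 1 + (q.length : ℕ∞) :=
            add_le_add (le_of_eq (edist_eq_one_iff_adj.mpr ha)) ih
        _ = ((q.length + 1 : ℕ) : ℕ∞) := by push_cast; ring
        _ = _ := by simp [SimpleGraph.Walk.length_cons]

lemma edist_proj' {a b : V ⊕ (Σ v : V, Fin (m * (G.neighborSet v).ncard))} :
    G.edist (f m G a) (f m G b) ≤ (shmStep m G).edist a b := by
  conv_rhs => rw [SimpleGraph.edist_eq_sInf]
  refine le_sInf ?_
  rintro x ⟨p, rfl⟩
  exact edist_proj p

/-- The inclusion of the old graph as a graph homomorphism. -/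
def ι (m : ℕ) (G : SimpleGraph V) : G →g shmStep m G :=
  ⟨Sum.inl, fun h => adj_inl_inl.mpr h⟩

lemma edist_inl_inl {u v : V} :
    (shmStep m G).edist (Sum.inl u) (Sum.inl v) = G.edist u v := by
  refine le_antisymm ?_ (edist_proj' (a := Sum.inl u) (b := Sum.inl v))
  rcases eq_or_ne (G.edist u v) ⊤ with h | h
  · rw [h]; exact le_top
  · obtain ⟨p, hp⟩ := SimpleGraph.exists_walk_of_edist_ne_top h
    calc (shmStep m G).edist (Sum.inl u) (Sum.inl v)
        ≤ ((p.map (ι m G)).length : ℕ∞) := SimpleGraph.edist_le _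
      _ = (p.length : ℕ∞) := by rw [SimpleGraph.Walk.length_map]
      _ = G.edist u v := hp

lemma walk_from_leaf {w : Σ v : V, Fin (m * (G.neighborSet v).ncard)}
    {a : V ⊕ (Σ v : V, Fin (m * (G.neighborSet v).ncard))}
    (q : (shmStep m G).Walk (Sum.inr w) a) (ha : a ≠ Sum.inr w) :
    G.edist w.1 (f m G a) + 1 ≤ q.length := by
  cases q with
  | nil => exact absurd rfl ha
  | @cons _ x _ h q' =>
    have hx : x = Sum.inl w.1 := adj_inr_left.mp h
    subst hx
    have := edist_proj q'
    calc G.edist w.1 (f m G a) + 1 ≤ (q'.length : ℕ∞) + 1 := by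
          gcongr
          exact this
      _ = ((q'.length + 1 : ℕ) : ℕ∞) := by push_cast; ring
      _ = _ := by simp [SimpleGraph.Walk.length_cons]

lemma edist_leaf_lb {w : Σ v : V, Fin (m * (G.neighborSet v).ncard)}
    {a : V ⊕ (Σ v : V, Fin (m * (G.neighborSet v).ncard))} (ha : a ≠ Sum.inr w) :
    G.edist (f m G a) w.1 + 1 ≤ (shmStep m G).edist a (Sum.inr w) := by
  conv_rhs => rw [SimpleGraph.edist_eq_sInf]
  refine le_sInf ?_
  rintro x ⟨p, rfl⟩
  have := walk_from_leaf p.reverse ha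
  rw [SimpleGraph.Walk.length_reverse] at this
  rwa [edist_comm]

lemma adj_leaf {w : Σ v : V, Fin (m * (G.neighborSet v).ncard)} :
    (shmStep m G).Adj (Sum.inr w) (Sum.inl w.1) := adj_inr_left.mpr rfl

lemma edist_inr_inl {w : Σ v : V, Fin (m * (G.neighborSet v).ncard)} {v : V} :
    (shmStep m G).edist (Sum.inr w) (Sum.inl v) = G.edist w.1 v + 1 := by
  refine le_antisymm ?_ ?_
  · calc (shmStep m G).edist (Sum.inr w) (Sum.inl v)
        ≤ (shmStep m G).edist (Sum.inr w) (Sum.inl w.1) +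
          (shmStep m G).edist (Sum.inl w.1) (Sum.inl v) := SimpleGraph.edist_triangle
      _ = 1 + G.edist w.1 v := by
          rw [edist_eq_one_iff_adj.mpr adj_leaf, edist_inl_inl]
      _ = G.edist w.1 v + 1 := by ring
  · rw [edist_comm]
    have := edist_leaf_lb (m := m) (G := G) (w := w) (a := Sum.inl v) (by simp)
    simpa [f, edist_comm] using this

lemma edist_inr_inr {w w' : Σ v : V, Fin (m * (G.neighborSet v).ncard)} (hne : w ≠ w') :
    (shmStep m G).edist (Sum.inr w) (Sum.inr w') = G.edist w.1 w'.1 + 2 := by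
  refine le_antisymm ?_ ?_
  · calc (shmStep m G).edist (Sum.inr w) (Sum.inr w')
        ≤ (shmStep m G).edist (Sum.inr w) (Sum.inl w'.1) +
          (shmStep m G).edist (Sum.inl w'.1) (Sum.inr w') := SimpleGraph.edist_triangle
      _ ≤ (G.edist w.1 w'.1 + 1) + 1 := by
          rw [edist_inr_inl]
          gcongr
          rw [edist_comm]
          exact le_of_eq (edist_eq_one_iff_adj.mpr adj_leaf)
      _ = G.edist w.1 w'.1 + 2 := by ring
  · conv_rhs => rw [SimpleGraph.edist_eq_sInf]
    refine le_sInf ?_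
    rintro x ⟨p, rfl⟩
    cases p with
    | nil => exact absurd rfl hne
    | @cons _ x _ h q =>
      have hx : x = Sum.inl w.1 := adj_inr_left.mp h
      subst hx
      have h1 : G.edist w.1 w'.1 + 1 ≤ (shmStep m G).edist (Sum.inl w.1) (Sum.inr w') :=
        edist_leaf_lb (by simp)
      have h2 : (shmStep m G).edist (Sum.inl w.1) (Sum.inr w') ≤ (q.length : ℕ∞) :=
        SimpleGraph.edist_le _
      calc G.edist w.1 w'.1 + 2 = (G.edist w.1 w'.1 + 1) + 1 := by ring
        _ ≤ (q.length : ℕ∞) + 1 := by gcongr; exact h1.trans h2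
        _ = ((q.length + 1 : ℕ) : ℕ∞) := by push_cast; ring
        _ = _ := by simp [SimpleGraph.Walk.length_cons]

lemma reach_to_inl (hc : G.Connected)
    (a : V ⊕ (Σ v : V, Fin (m * (G.neighborSet v).ncard))) :
    (shmStep m G).Reachable a (Sum.inl (f m G a)) := by
  cases a with
  | inl u => exact SimpleGraph.Reachable.refl _
  | inr w => exact (adj_leaf).reachable

lemma step_connected (hc : G.Connected) : (shmStep m G).Connected := by
  have : Nonempty V := hc.nonempty
  refine ⟨fun a b => ?_⟩
  refine ((reach_to_inl hc a).trans ?_).trans (reach_to_inl hc b).symm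
  exact (hc.preconnected (f m G a) (f m G b)).map (ι m G)

lemma exists_adj (hc : G.Connected) (hE : G.edgeSet.Nonempty) (v : V) :
    ∃ x, G.Adj v x := by
  have hxy : ∃ x y : V, G.Adj x y := by
    obtain ⟨e, he⟩ := hE
    induction e with
    | h x y => exact ⟨x, y, he⟩
  obtain ⟨x, y, hxy⟩ := hxy
  have : Nontrivial V := ⟨x, y, hxy.ne⟩
  obtain ⟨u, hu⟩ := exists_ne v
  obtain ⟨p⟩ := hc.preconnected v u
  cases p with
  | nil => exact absurd rfl hu.symm
  | cons h _ => exact ⟨_, h⟩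

lemma deg_pos [Finite V] (hm : 1 ≤ m) (hc : G.Connected) (hE : G.edgeSet.Nonempty)
    (v : V) : 0 < m * (G.neighborSet v).ncard := by
  obtain ⟨x, hx⟩ := exists_adj hc hE v
  have hpos : 0 < (G.neighborSet v).ncard := by
    rw [Set.ncard_pos (G.neighborSet v).toFinite]
    exact ⟨x, hx⟩
  exact Nat.mul_pos hm hpos

lemma step_ediam [Finite V] (hm : 1 ≤ m) (hc : G.Connected) (hE : G.edgeSet.Nonempty) :
    (shmStep m G).ediam = G.ediam + 2 := by
  have : Nonempty V := hc.nonempty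
  refine le_antisymm ?_ ?_
  · refine ediam_le_of_edist_le ?_
    rintro (u | w) (v | w')
    · rw [edist_inl_inl]
      exact le_trans edist_le_ediam le_self_add
    · rw [edist_comm, edist_inr_inl]
      gcongr
      · exact edist_le_ediam
      · norm_num
    · rw [edist_inr_inl]
      gcongr
      · exact edist_le_ediam
      · norm_num
    · rcases eq_or_ne w w' with rfl | hne
      · simp [edist_self]
      · rw [edist_inr_inr hne]
        gcongr
        exact edist_le_ediam
  · obtain ⟨u, v, huv⟩ := exists_edist_eq_ediam_of_finite (G := G)
    have hnt : Nontrivial V := by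
      obtain ⟨e, he⟩ := hE
      induction e with
      | h x y => exact ⟨x, y, he.ne⟩
    have hdne : G.ediam ≠ 0 := ediam_ne_zero
    have huv' : u ≠ v := by
      intro h
      subst h
      rw [edist_self] at huv
      exact hdne huv.symm
    set w : Σ v : V, Fin (m * (G.neighborSet v).ncard) :=
      ⟨u, ⟨0, deg_pos hm hc hE u⟩⟩ with hw
    set w' : Σ v : V, Fin (m * (G.neighborSet v).ncard) :=
      ⟨v, ⟨0, deg_pos hm hc hE v⟩⟩ with hw'
    have hne : w ≠ w' := by
      intro h
      exact huv' (congrArg Sigma.fst h)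
    calc G.ediam + 2 = G.edist u v + 2 := by rw [huv]
      _ = (shmStep m G).edist (Sum.inr w) (Sum.inr w') := (edist_inr_inr hne).symm
      _ ≤ (shmStep m G).ediam := edist_le_ediam

lemma ediam_ne_top_of_connected [Finite V] (hc : G.Connected) : G.ediam ≠ ⊤ := by
  have : Nonempty V := hc.nonempty
  obtain ⟨u, v, huv⟩ := exists_edist_eq_ediam_of_finite (G := G)
  rw [← huv]
  exact edist_ne_top_iff_reachable.mpr (hc.preconnected u v)

lemma step_edge (hE : G.edgeSet.Nonempty) : (shmStep m G).edgeSet.Nonempty := by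
  obtain ⟨e, he⟩ := hE
  induction e with
  | h x y =>
    exact ⟨s(Sum.inl x, Sum.inl y), (shmStep m G).mem_edgeSet.mpr (adj_inl_inl.mpr he)⟩

lemma step_diam [Finite V] (hm : 1 ≤ m) (hc : G.Connected) (hE : G.edgeSet.Nonempty) :
    (shmStep m G).diam = G.diam + 2 := by
  rw [SimpleGraph.diam, step_ediam hm hc hE,
    ENat.toNat_add (ediam_ne_top_of_connected hc) (by simp)]
  rfl

end ShmAux

/-- In the SHM model with `p = 1` (and `m ≥ 1`, started from a
connected graph with at least one edge), the diameter increases by exactly `2` at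
every step; hence `diam(SHM¹_n) = diam(SHM_0) + 2n`, and in particular
`diam(SHM¹_n) = Θ(n)`. -/
theorem shm_diam (m : ℕ) (hm : 1 ≤ m) (V0 : Type) [Fintype V0]
    (G0 : SimpleGraph V0) (hconn : G0.Connected) (hE : G0.edgeSet.Nonempty) :
    (∀ n : ℕ, (SHM m V0 G0 (n + 1)).2.diam = (SHM m V0 G0 n).2.diam + 2) ∧
    (∀ n : ℕ, (SHM m V0 G0 n).2.diam = G0.diam + 2 * n) := by
  have key : ∀ n : ℕ, (SHM m V0 G0 n).2.Connected ∧ (SHM m V0 G0 n).2.edgeSet.Nonempty ∧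
      Finite (SHM m V0 G0 n).1 ∧ (SHM m V0 G0 n).2.diam = G0.diam + 2 * n := by
    intro n
    induction n with
    | zero => exact ⟨hconn, hE, by show Finite V0; infer_instance, by simp [SHM]⟩
    | succ k ih =>
      obtain ⟨hc, he, hf, hd⟩ := ih
      haveI := hf
      have hstep : (SHM m V0 G0 (k + 1)).2 = shmStep m (SHM m V0 G0 k).2 := rfl
      have hfin : Finite (SHM m V0 G0 (k + 1)).1 := by
        show Finite ((SHM m V0 G0 k).1 ⊕ _)
        infer_instance
      refine ⟨?_, ?_, hfin, ?_⟩
      · rw [hstep]; exact ShmAux.step_connected hc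
      · rw [hstep]; exact ShmAux.step_edge he
      · show (shmStep m (SHM m V0 G0 k).2).diam = _
        rw [ShmAux.step_diam hm hc he, hd]; ring
  refine ⟨fun n => ?_, fun n => (key n).2.2.2⟩
  rw [(key (n + 1)).2.2.2, (key n).2.2.2]
  ring
end

section
/- Let T_n be a rooted tree of height n in which every vertex not in generation n has at least one child, and let L_i denote the number of vertices at graph distance i from the root. Then for every k ≤ n, the minimum number N_B^n(2k+1) of (2k+1)-boxes needed to cover T_n satisfies L_{n−k} ≤ N_B^n(2k+1) ≤ Σ_{i=0}^{n−k} L_i. -/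
open Filter Finset

open SimpleGraph Walk

set_option linter.unusedSectionVars false

variable {V : Type} [DecidableEq V] {T : SimpleGraph V}

lemma tb_split (hconn : T.Connected) {u v : V} (p : T.Walk u v)
    (hp : p.length = T.dist u v) {z : V} (hz : z ∈ p.support) :
    T.dist u z = (p.takeUntil z hz).length ∧ T.dist z v = (p.dropUntil z hz).length ∧
      T.dist u z + T.dist z v = p.length := by
  have h1 : T.dist u z ≤ (p.takeUntil z hz).length := SimpleGraph.dist_le _
  have h2 : T.dist z v ≤ (p.dropUntil z hz).length := SimpleGraph.dist_le _
  have h3 : (p.takeUntil z hz).length + (p.dropUntil z hz).length = p.length := by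
    rw [← Walk.length_append, Walk.take_spec]
  have h4 : T.dist u v ≤ T.dist u z + T.dist z v := hconn.dist_triangle
  omega

lemma tb_unique_on (hconn : T.Connected) {u v : V} (p : T.Walk u v)
    (hp : p.length = T.dist u v) {z z' : V} (hz : z ∈ p.support) (hz' : z' ∈ p.support)
    (hd : T.dist u z = T.dist u z') : z = z' := by
  obtain ⟨ha, hb, hab⟩ := tb_split hconn p hp hz
  have hz'2 : z' ∈ ((p.takeUntil z hz).append (p.dropUntil z hz)).support := by
    rwa [Walk.take_spec]
  obtain ⟨ha', hb', hab'⟩ := tb_split hconn p hp hz'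
  rcases (Walk.mem_support_append_iff _ _).mp hz'2 with h | h
  · obtain ⟨hc, hd', hcd⟩ := tb_split hconn (p.takeUntil z hz) ha.symm h
    have : T.dist z' z = 0 := by omega
    exact ((hconn z' z).dist_eq_zero_iff.mp this).symm
  · obtain ⟨hc, hd', hcd⟩ := tb_split hconn (p.dropUntil z hz) hb.symm h
    have : T.dist z z' = 0 := by omega
    exact (hconn z z').dist_eq_zero_iff.mp this

/-- On a shortest walk there is a vertex at every intermediate distance. -/
lemma tb_exists_at (hconn : T.Connected) {u v : V} (p : T.Walk u v) :
    p.length = T.dist u v → ∀ j ≤ p.length,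
      ∃ z, T.dist u z = j ∧ T.dist z v = p.length - j := by
  induction p with
  | nil =>
    intro _ j hj
    have : j = 0 := by simpa using hj
    subst this
    exact ⟨_, SimpleGraph.dist_self, by simp [SimpleGraph.dist_self]⟩
  | @cons u w v h q ih =>
    intro hp j hj
    have hd1 : T.dist u w ≤ 1 := by
      simpa using SimpleGraph.dist_le (Walk.cons h Walk.nil)
    have hqd : T.dist w v ≤ q.length := SimpleGraph.dist_le q
    have htr : T.dist u v ≤ T.dist u w + T.dist w v := hconn.dist_triangle
    simp only [Walk.length_cons] at hp
    have hq : q.length = T.dist w v := by omega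
    cases j with
    | zero => exact ⟨u, SimpleGraph.dist_self, by simp [Walk.length_cons]; omega⟩
    | succ j' =>
      have hj' : j' ≤ q.length := by simpa using hj
      obtain ⟨z, hz1, hz2⟩ := ih hq j' hj'
      have h1 : T.dist u z ≤ T.dist u w + T.dist w z := hconn.dist_triangle
      have h2 : T.dist u v ≤ T.dist u z + T.dist z v := hconn.dist_triangle
      have h3 : T.dist z v ≤ q.length - j' := le_of_eq hz2
      simp only [Walk.length_cons]
      exact ⟨z, by omega, by omega⟩

/-- Uniqueness of the ancestor at a given level in a tree. -/
lemma tb_anc_unique (hG : T.IsTree) {ρ w a a' : V} {m : ℕ} (hm : m ≤ T.dist ρ w)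
    (ha1 : T.dist ρ a = m) (ha2 : T.dist a w = T.dist ρ w - m)
    (ha1' : T.dist ρ a' = m) (ha2' : T.dist a' w = T.dist ρ w - m) : a = a' := by
  have hconn := hG.isConnected
  obtain ⟨pa, hpa⟩ := (hconn ρ a).exists_walk_length_eq_dist
  obtain ⟨qa, hqa⟩ := (hconn a w).exists_walk_length_eq_dist
  obtain ⟨pa', hpa'⟩ := (hconn ρ a').exists_walk_length_eq_dist
  obtain ⟨qa', hqa'⟩ := (hconn a' w).exists_walk_length_eq_dist
  have hW : (pa.append qa).length = T.dist ρ w := by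
    rw [Walk.length_append, hpa, hqa, ha1, ha2]; omega
  have hW' : (pa'.append qa').length = T.dist ρ w := by
    rw [Walk.length_append, hpa', hqa', ha1', ha2']; omega
  have hPW : (pa.append qa).IsPath := (pa.append qa).isPath_of_length_eq_dist hW
  have hPW' : (pa'.append qa').IsPath := (pa'.append qa').isPath_of_length_eq_dist hW'
  have heq : pa.append qa = pa'.append qa' := by
    have := hG.IsAcyclic.path_unique ⟨pa.append qa, hPW⟩ ⟨pa'.append qa', hPW'⟩
    exact congrArg Subtype.val this
  have hamem : a ∈ (pa.append qa).support :=
    (Walk.mem_support_append_iff _ _).mpr (Or.inl (Walk.end_mem_support _))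
  have hamem' : a' ∈ (pa.append qa).support := by
    rw [heq]
    exact (Walk.mem_support_append_iff _ _).mpr (Or.inl (Walk.end_mem_support _))
  exact tb_unique_on hconn (pa.append qa) hW hamem hamem' (by rw [ha1, ha1'])

/-- In a tree, distances to a fixed vertex of two adjacent vertices differ by exactly one. -/
lemma tb_adj_level (hG : T.IsTree) {ρ u v : V} (h : T.Adj u v) :
    T.dist ρ v = T.dist ρ u + 1 ∨ T.dist ρ u = T.dist ρ v + 1 := by
  have hconn := hG.isConnected
  have h1 : T.dist u v = 1 := SimpleGraph.dist_eq_one_iff_adj.mpr h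
  have h2 : T.dist ρ v ≤ T.dist ρ u + 1 := by
    have := hconn.dist_triangle (u := ρ) (v := u) (w := v); omega
  have h3 : T.dist ρ u ≤ T.dist ρ v + 1 := by
    have hvu : T.dist v u = 1 := SimpleGraph.dist_eq_one_iff_adj.mpr h.symm
    have := hconn.dist_triangle (u := ρ) (v := v) (w := u); omega
  by_contra hcon
  push_neg at hcon
  have heqlev : T.dist ρ u = T.dist ρ v := by omega
  obtain ⟨p, hp⟩ := (hconn ρ u).exists_walk_length_eq_dist
  have hpath : p.IsPath := p.isPath_of_length_eq_dist hp
  by_cases hv : v ∈ p.support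
  · obtain ⟨ha, hb, hab⟩ := tb_split hconn p hp hv
    have hvu : T.dist v u = 1 := SimpleGraph.dist_eq_one_iff_adj.mpr h.symm
    omega
  · have hvr : v ∉ p.reverse.support := by rwa [Walk.support_reverse, List.mem_reverse]
    have hq : ((Walk.cons h.symm p.reverse).reverse).IsPath :=
      (hpath.reverse.cons hvr).reverse
    obtain ⟨p', hp'⟩ := (hconn ρ v).exists_walk_length_eq_dist
    have hp'path : p'.IsPath := p'.isPath_of_length_eq_dist hp'
    have := hG.IsAcyclic.path_unique ⟨(Walk.cons h.symm p.reverse).reverse, hq⟩ ⟨p', hp'path⟩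
    have hlen : ((Walk.cons h.symm p.reverse).reverse).length = p'.length :=
      congrArg Walk.length (congrArg Subtype.val this)
    simp only [Walk.length_reverse, Walk.length_cons] at hlen
    omega


/-- step up along an edge preserves the ancestor property (no tree needed). -/
lemma tb_anc_up {V : Type} {T : SimpleGraph V} (hconn : T.Connected) {ρ u u' a : V} {m : ℕ}
    (h : T.Adj u u') (hlev : T.dist ρ u' = T.dist ρ u + 1) (hm : m ≤ T.dist ρ u)
    (ha1 : T.dist ρ a = m) (ha2 : T.dist a u = T.dist ρ u - m) :
    T.dist a u' = T.dist ρ u' - m := by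
  have h1 : T.dist u u' = 1 := SimpleGraph.dist_eq_one_iff_adj.mpr h
  have h2 : T.dist a u' ≤ T.dist a u + T.dist u u' := hconn.dist_triangle
  have h3 : T.dist ρ u' ≤ T.dist ρ a + T.dist a u' := hconn.dist_triangle
  omega

/-- the ancestor at level `m` is constant along a walk all of whose vertices are
at distance at least `m` from `ρ`. -/
lemma tb_anc_const {V : Type} [DecidableEq V] {T : SimpleGraph V} (hG : T.IsTree) {ρ : V} {m : ℕ}
    {x y : V} (q : T.Walk x y) (hq : ∀ z ∈ q.support, m ≤ T.dist ρ z) :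
    ∀ a, T.dist ρ a = m → T.dist a x = T.dist ρ x - m → T.dist a y = T.dist ρ y - m := by
  have hconn := hG.isConnected
  induction q with
  | nil => exact fun a _ h2 => h2
  | @cons x x' y h q ih =>
    intro a ha1 ha2
    have hx : m ≤ T.dist ρ x := hq x (Walk.start_mem_support _)
    have hx' : m ≤ T.dist ρ x' := hq x' (by simp)
    have hq' : ∀ z ∈ q.support, m ≤ T.dist ρ z := fun z hz => hq z (by simp [hz])
    rcases tb_adj_level hG h with hl | hl
    · exact ih hq' a ha1 (tb_anc_up hconn h hl hx ha1 ha2)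
    · -- x' is the parent of x
      obtain ⟨p, hp⟩ := (hconn ρ x').exists_walk_length_eq_dist
      obtain ⟨a', ha1', ha2'⟩ := tb_exists_at hconn p hp m (by omega)
      rw [hp] at ha2'
      have ha2x : T.dist a' x = T.dist ρ x - m := tb_anc_up hconn h.symm hl hx' ha1' ha2'
      have : a = a' := tb_anc_unique hG hx ha1 ha2 ha1' ha2x
      subst this
      exact ih hq' a ha1' ha2'

/-- existence of a descendant at any admissible depth. -/
lemma tb_desc {V : Type} {T : SimpleGraph V} (hconn : T.Connected) {ρ : V} {n : ℕ}
    (hchild : ∀ v : V, T.dist ρ v < n → ∃ w : V, T.Adj v w ∧ T.dist ρ w = T.dist ρ v + 1)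
    (v : V) : ∀ j, T.dist ρ v + j ≤ n →
      ∃ w, T.dist ρ w = T.dist ρ v + j ∧ T.dist v w = j := by
  intro j
  induction j with
  | zero => exact fun _ => ⟨v, by simp [SimpleGraph.dist_self]⟩
  | succ j ih =>
    intro hjn
    obtain ⟨w, hw1, hw2⟩ := ih (by omega)
    obtain ⟨w', hadj, hw'⟩ := hchild w (by omega)
    have h1 : T.dist w w' = 1 := SimpleGraph.dist_eq_one_iff_adj.mpr hadj
    have h2 : T.dist v w' ≤ T.dist v w + T.dist w w' := hconn.dist_triangle
    have h3 : T.dist ρ w' ≤ T.dist ρ v + T.dist v w' := hconn.dist_triangle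
    exact ⟨w', by omega, by omega⟩

/-- distance in a subgraph dominates distance in the ambient graph. -/
lemma tb_subgraph_dist {V : Type} {T : SimpleGraph V} (B : T.Subgraph) (u v : B.verts)
    (hr : B.coe.Reachable u v) : T.dist (u : V) (v : V) ≤ B.coe.dist u v := by
  obtain ⟨p, hp⟩ := hr.exists_walk_length_eq_dist
  have := SimpleGraph.dist_le (p.map B.hom)
  rwa [Walk.length_map, hp] at this
/-- A walk staying inside `S` lifts to the induced subgraph. -/
lemma tb_induced_walk {V : Type} {T : SimpleGraph V} (S : Set V) :
    ∀ {u v : V} (p : T.Walk u v), (∀ z ∈ p.support, z ∈ S) → ∀ (hu : u ∈ S) (hv : v ∈ S),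
      ∃ q : ((⊤ : T.Subgraph).induce S).coe.Walk ⟨u, hu⟩ ⟨v, hv⟩, q.length = p.length := by
  intro u v p
  induction p with
  | nil => exact fun _ hu hv => ⟨Walk.nil, rfl⟩
  | @cons u w v h p ih =>
    intro hS hu hv
    have hw : w ∈ S := hS w (by simp)
    have hadj : ((⊤ : T.Subgraph).induce S).coe.Adj ⟨u, hu⟩ ⟨w, hw⟩ := by
      simp only [SimpleGraph.Subgraph.coe_adj, SimpleGraph.Subgraph.induce_adj,
        SimpleGraph.Subgraph.top_adj]
      exact ⟨hu, hw, h⟩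
    obtain ⟨q, hq⟩ := ih (fun z hz => hS z (by simp [hz])) hw hv
    exact ⟨Walk.cons hadj q, by simp [hq]⟩

/-- The box rooted at `v` of radius `k`. -/
lemma tb_box {V : Type} [DecidableEq V] {T : SimpleGraph V} (hconn : T.Connected) (ρ v : V)
    (k : ℕ) :
    T.IsBox (2 * k + 1)
      ((⊤ : T.Subgraph).induce {w | T.dist ρ w = T.dist ρ v + T.dist v w ∧ T.dist v w ≤ k}) := by
  set S : Set V := {w | T.dist ρ w = T.dist ρ v + T.dist v w ∧ T.dist v w ≤ k} with hSdef
  have hvS : v ∈ S := ⟨by simp [SimpleGraph.dist_self], by simp [SimpleGraph.dist_self]⟩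
  have key : ∀ (x : V) (hx : x ∈ S),
      ∃ q : ((⊤ : T.Subgraph).induce S).coe.Walk ⟨v, hvS⟩ ⟨x, hx⟩, q.length ≤ k := by
    intro x hx
    obtain ⟨p, hp⟩ := (hconn v x).exists_walk_length_eq_dist
    have hsupp : ∀ z ∈ p.support, z ∈ S := by
      intro z hz
      obtain ⟨h1, h2, h3⟩ := tb_split hconn p hp hz
      have t1 : T.dist ρ z ≤ T.dist ρ v + T.dist v z := hconn.dist_triangle
      have t2 : T.dist ρ x ≤ T.dist ρ z + T.dist z x := hconn.dist_triangle
      obtain ⟨hx1, hx2⟩ := hx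
      constructor <;> omega
    obtain ⟨q, hq⟩ := tb_induced_walk S p hsupp hvS hx
    exact ⟨q, by rw [hq, hp]; exact hx.2⟩
  rintro ⟨u, hu⟩ ⟨w, hw⟩
  obtain ⟨q1, hq1⟩ := key u hu
  obtain ⟨q2, hq2⟩ := key w hw
  refine ⟨⟨q1.reverse.append q2⟩, ?_⟩
  calc ((⊤ : T.Subgraph).induce S).coe.dist ⟨u, hu⟩ ⟨w, hw⟩
      ≤ (q1.reverse.append q2).length := SimpleGraph.dist_le _
    _ ≤ 2 * k + 1 - 1 := by
        rw [Walk.length_append, Walk.length_reverse]; omega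

/-- Let `T` be a finite rooted tree of height `n` (no vertex is at
distance more than `n` from the root `ρ`) in which every vertex at distance less than
`n` from the root has at least one child.  Writing `L i` for the number of vertices at
distance `i` from the root, for every `k ≤ n` the minimal number of `(2k+1)`-boxes
covering `T` satisfies `L (n-k) ≤ N_B^n(2k+1) ≤ Σ_{i=0}^{n-k} L i`. -/
theorem tree_boxing_bounds {V : Type} [Fintype V] (T : SimpleGraph V)
    (htree : T.IsTree) (ρ : V) (n : ℕ)
    (hheight : ∀ v : V, T.dist ρ v ≤ n)
    (hchild : ∀ v : V, T.dist ρ v < n → ∃ w : V, T.Adj v w ∧ T.dist ρ w = T.dist ρ v + 1)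
    (L : ℕ → ℕ) (hL : ∀ i, L i = Nat.card {v : V // T.dist ρ v = i})
    (k : ℕ) (hk : k ≤ n) :
    L (n - k) ≤ coveringNumber T (2 * k + 1) ∧
      coveringNumber T (2 * k + 1) ≤ ∑ i ∈ Finset.range (n - k + 1), L i := by
  classical
  have hconn := htree.isConnected
  set S : V → Set V :=
    fun v => {w | T.dist ρ w = T.dist ρ v + T.dist v w ∧ T.dist v w ≤ k} with hS
  set Box : V → T.Subgraph := fun v => (⊤ : T.Subgraph).induce (S v) with hBox
  set F : Finset T.Subgraph :=
    (Finset.univ.filter (fun v => T.dist ρ v ≤ n - k)).image Box with hF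
  have hboxes : ∀ B ∈ F, T.IsBox (2 * k + 1) B := by
    intro B hB
    rw [hF, Finset.mem_image] at hB
    obtain ⟨v, _, rfl⟩ := hB
    exact tb_box hconn ρ v k
  have hcover : ∀ x : V, ∃ B ∈ F, x ∈ B.verts := by
    intro x
    by_cases hx : T.dist ρ x ≤ n - k
    · refine ⟨Box x, ?_, ?_⟩
      · exact Finset.mem_image_of_mem Box (Finset.mem_filter.mpr ⟨Finset.mem_univ _, hx⟩)
      · exact ⟨by simp [SimpleGraph.dist_self], by simp [SimpleGraph.dist_self]⟩
    · push_neg at hx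
      obtain ⟨p, hp⟩ := (hconn ρ x).exists_walk_length_eq_dist
      obtain ⟨a, ha1, ha2⟩ := tb_exists_at hconn p hp (n - k) (by omega)
      rw [hp] at ha2
      have hhx := hheight x
      refine ⟨Box a, ?_, ?_⟩
      · exact Finset.mem_image_of_mem Box
          (Finset.mem_filter.mpr ⟨Finset.mem_univ _, le_of_eq ha1⟩)
      · exact ⟨by omega, by omega⟩
  have hmem : F.card ∈ {m : ℕ | ∃ F : Finset T.Subgraph, F.card = m ∧
      (∀ B ∈ F, T.IsBox (2 * k + 1) B) ∧ ∀ v : V, ∃ B ∈ F, v ∈ B.verts} :=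
    ⟨F, rfl, hboxes, hcover⟩
  constructor
  · -- lower bound
    refine le_csInf ⟨F.card, hmem⟩ ?_
    rintro m ⟨F', hcard, hbox', hcov'⟩
    have hdesc : ∀ v : {v : V // T.dist ρ v = n - k},
        ∃ w, T.dist ρ w = n ∧ T.dist (v : V) w = k := by
      rintro ⟨v, hv⟩
      obtain ⟨w, hw1, hw2⟩ := tb_desc hconn hchild v k (by omega)
      exact ⟨w, by omega, hw2⟩
    choose w hw1 hw2 using hdesc
    choose Bf hBf hmemB using fun v => hcov' (w v)
    have hinj : Function.Injective
        (fun v : {v : V // T.dist ρ v = n - k} => (⟨Bf v, hBf v⟩ : {B // B ∈ F'})) := by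
      rintro v1 v2 heq
      simp only [Subtype.mk.injEq] at heq
      have hm1 : w v1 ∈ (Bf v1).verts := hmemB v1
      have hm2 : w v2 ∈ (Bf v1).verts := heq ▸ hmemB v2
      obtain ⟨hreach, hdist⟩ := hbox' (Bf v1) (hBf v1) ⟨w v1, hm1⟩ ⟨w v2, hm2⟩
      have hTd : T.dist (w v1) (w v2) ≤ 2 * k :=
        le_trans (tb_subgraph_dist (Bf v1) ⟨w v1, hm1⟩ ⟨w v2, hm2⟩ hreach) (by omega)
      obtain ⟨q, hq⟩ := (hconn (w v1) (w v2)).exists_walk_length_eq_dist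
      have hsupp : ∀ z ∈ q.support, n - k ≤ T.dist ρ z := by
        intro z hz
        obtain ⟨h1, h2, h3⟩ := tb_split hconn q hq hz
        have t1 : T.dist ρ (w v1) ≤ T.dist ρ z + T.dist z (w v1) := hconn.dist_triangle
        have t2 : T.dist ρ (w v2) ≤ T.dist ρ z + T.dist z (w v2) := hconn.dist_triangle
        have hcomm : T.dist z (w v1) = T.dist (w v1) z := SimpleGraph.dist_comm
        have e1 := hw1 v1
        have e2 := hw1 v2
        omega
      have hanc : T.dist (v1 : V) (w v2) = T.dist ρ (w v2) - (n - k) := by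
        refine tb_anc_const htree q hsupp (v1 : V) v1.2 ?_
        have := hw1 v1; have := hw2 v1; omega
      have : (v1 : V) = (v2 : V) := by
        refine tb_anc_unique htree (w := w v2) (m := n - k) ?_ v1.2 hanc v2.2 ?_
        · have := hw1 v2; omega
        · have := hw1 v2; have := hw2 v2; omega
      exact Subtype.ext this
    have hcardle : Nat.card {v : V // T.dist ρ v = n - k} ≤ Nat.card {B // B ∈ F'} :=
      Nat.card_le_card_of_injective _ hinj
    rw [hL]
    calc Nat.card {v : V // T.dist ρ v = n - k}
        ≤ Nat.card {B // B ∈ F'} := hcardle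
      _ = F'.card := by rw [Nat.card_eq_fintype_card, Fintype.card_coe]
      _ = m := hcard
  · -- upper bound
    have h1 : coveringNumber T (2 * k + 1) ≤ F.card := Nat.sInf_le hmem
    have h2 : F.card ≤ ∑ i ∈ Finset.range (n - k + 1), L i := by
      calc F.card ≤ (Finset.univ.filter (fun v => T.dist ρ v ≤ n - k)).card :=
            Finset.card_image_le
        _ = ∑ i ∈ Finset.range (n - k + 1),
              ((Finset.univ.filter (fun v => T.dist ρ v ≤ n - k)).filter
                (fun v => T.dist ρ v = i)).card := by
            refine Finset.card_eq_sum_card_fiberwise ?_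
            intro x hx
            rw [Finset.mem_coe, Finset.mem_filter] at hx
            exact Finset.mem_coe.mpr (Finset.mem_range.mpr (by omega))
        _ ≤ ∑ i ∈ Finset.range (n - k + 1), L i := by
            refine Finset.sum_le_sum ?_
            intro i _
            rw [hL, Nat.card_eq_fintype_card, Fintype.card_subtype]
            refine Finset.card_le_card ?_
            intro x hx
            simp only [Finset.mem_filter] at hx ⊢
            exact ⟨hx.1.1, hx.2⟩
    omega
end
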